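/- arXiv:2311.13327 — 6 statements merged into one kernel-verified Lean document; each statement's English description precedes it below -/
import Mathlib

section
/- Let (Ω, 𝓐, μ) be a probability space, Z : Ω → ℝᵏ and X : Ω → ℝ measurable, and β ∈ (0,1). Let v : ℝᵏ × ℝᵖ → ℝ be measurable such that for every z the map θ ↦ v(z,θ) is differentiable on ℝᵖ with ‖∇_θ v(z,θ)‖ ≤ V₁(z) for all θ, where V₁ is measurable with E[V₁(Z)] < ∞. Suppose g(θ) := E[S^VaR(v(Z,θ), X)] is finite for some (hence every) θ, and fix θ₀ with μ(X = v(Z,θ₀)) = 0. Then g is (Fréchet) differentiable at θ₀ with gradient ∇g(θ₀) = E[(1{X ≤ v(Z,θ₀)} − β)·∇_θ v(Z,θ₀)]. -/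
open MeasureTheory

/-- The VaR (pinball) loss `S^VaR(v,x) = (1{x ≤ v} − β)·(v − x)`. -/
noncomputable def SVaR (β v x : ℝ) : ℝ := ((if x ≤ v then (1 : ℝ) else 0) - β) * (v - x)

/-- The pinball loss is 1-Lipschitz in its prediction argument when `β ∈ (0,1)`. -/
lemma svar_lipschitz {β : ℝ} (hβ : β ∈ Set.Ioo (0 : ℝ) 1) (x : ℝ) :
    LipschitzWith 1 (fun a => SVaR β a x) := by
  obtain ⟨hβ0, hβ1⟩ := hβ
  apply LipschitzWith.of_dist_le_mul
  intro a b
  rw [Real.dist_eq, Real.dist_eq, NNReal.coe_one, one_mul]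
  have h1 : a - b ≤ |a - b| := le_abs_self _
  have h2 : -|a - b| ≤ a - b := neg_abs_le _
  simp only [SVaR]
  rw [abs_le]
  split_ifs with hxa hxb hxb <;> constructor <;> nlinarith

/-- Differentiation under the expectation for the non-smooth pinball criterion:
if `θ ↦ v(z,θ)` is differentiable with gradient dominated by an integrable `V₁(Z)`,
the expected pinball loss `g(θ) = E[S^VaR(v(Z,θ), X)]` is finite for some `θ`, and
`μ(X = v(Z,θ₀)) = 0`, then `g` is differentiable at `θ₀` with gradient
`E[(1{X ≤ v(Z,θ₀)} − β)·∇_θ v(Z,θ₀)]`. -/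
theorem pinball_criterion_gradient
    {Ω : Type*} [MeasurableSpace Ω] (μ : Measure Ω) [IsProbabilityMeasure μ]
    {k p : ℕ}
    (Z : Ω → EuclideanSpace ℝ (Fin k)) (hZ : Measurable Z)
    (X : Ω → ℝ) (hX : Measurable X)
    (β : ℝ) (hβ : β ∈ Set.Ioo (0 : ℝ) 1)
    (v : EuclideanSpace ℝ (Fin k) → EuclideanSpace ℝ (Fin p) → ℝ)
    (hvmeas : Measurable
      (fun zθ : EuclideanSpace ℝ (Fin k) × EuclideanSpace ℝ (Fin p) => v zθ.1 zθ.2))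
    (gv : EuclideanSpace ℝ (Fin k) → EuclideanSpace ℝ (Fin p) → EuclideanSpace ℝ (Fin p))
    (hdiff : ∀ z θ, HasGradientAt (v z) (gv z θ) θ)
    (V₁ : EuclideanSpace ℝ (Fin k) → ℝ) (hV₁meas : Measurable V₁)
    (hgv : ∀ z θ, ‖gv z θ‖ ≤ V₁ z)
    (hV₁int : Integrable (fun ω => V₁ (Z ω)) μ)
    (hfin : ∃ θ₁ : EuclideanSpace ℝ (Fin p),
      Integrable (fun ω => SVaR β (v (Z ω) θ₁) (X ω)) μ)
    (θ₀ : EuclideanSpace ℝ (Fin p))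
    (hties : μ {ω | X ω = v (Z ω) θ₀} = 0) :
    HasGradientAt (fun θ => ∫ ω, SVaR β (v (Z ω) θ) (X ω) ∂μ)
      (∫ ω, ((if X ω ≤ v (Z ω) θ₀ then (1 : ℝ) else 0) - β) • gv (Z ω) θ₀ ∂μ) θ₀ := by
  classical
  have hV₁nonneg : ∀ z, 0 ≤ V₁ z := fun z => le_trans (norm_nonneg _) (hgv z θ₀)
  -- the Fréchet derivative of `v z` at `θ`
  have hFd : ∀ z θ, HasFDerivAt (v z)
      (InnerProductSpace.toDual ℝ (EuclideanSpace ℝ (Fin p)) (gv z θ)) θ :=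
    fun z θ => (hdiff z θ).hasFDerivAt
  -- global Lipschitz bound for θ ↦ v z θ
  have hvlip : ∀ z, LipschitzWith (Real.nnabs (V₁ z)) (v z) := by
    intro z
    rw [← lipschitzOnWith_univ]
    apply Convex.lipschitzOnWith_of_nnnorm_hasFDerivWithin_le
      (f' := fun θ => InnerProductSpace.toDual ℝ (EuclideanSpace ℝ (Fin p)) (gv z θ))
      (fun θ _ => (hFd z θ).hasFDerivWithinAt) ?_ convex_univ
    intro θ _
    rw [← NNReal.coe_le_coe]
    simp only [coe_nnnorm, Real.coe_nnabs]
    rw [(InnerProductSpace.toDual ℝ (EuclideanSpace ℝ (Fin p))).norm_map]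
    exact le_trans (hgv z θ) (le_abs_self _)
  -- Lipschitz bound for θ ↦ SVaR β (v z θ) x
  have hθlip : ∀ ω, LipschitzWith (Real.nnabs (V₁ (Z ω)))
      (fun θ => SVaR β (v (Z ω) θ) (X ω)) := by
    intro ω
    simpa [Function.comp_def] using (svar_lipschitz hβ (X ω)).comp (hvlip (Z ω))
  -- measurability of θ-sections
  have hvθ : ∀ θ : EuclideanSpace ℝ (Fin p), Measurable (fun ω => v (Z ω) θ) := by
    intro θ
    exact hvmeas.comp (hZ.prodMk (measurable_const : Measurable fun _ : Ω => θ))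
  have hFmeas : ∀ θ : EuclideanSpace ℝ (Fin p),
      Measurable (fun ω => SVaR β (v (Z ω) θ) (X ω)) := by
    intro θ
    simp only [SVaR]
    exact ((Measurable.ite (measurableSet_le hX (hvθ θ)) measurable_const
      measurable_const).sub measurable_const).mul ((hvθ θ).sub hX)
  -- measurability of the gradient ω ↦ gv (Z ω) θ₀
  have hgvmeas : Measurable (fun ω => gv (Z ω) θ₀) := by
    refine (WithLp.measurable_toLp 2 (Fin p → ℝ)).comp (f := fun ω => WithLp.ofLp (gv (Z ω) θ₀)) ?_
    rw [measurable_pi_iff]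
    intro i
    set e : EuclideanSpace ℝ (Fin p) := EuclideanSpace.single i (1 : ℝ) with he
    set u : ℕ → ℝ := fun n => ((n : ℝ) + 1)⁻¹ with hu
    have hu0 : Filter.Tendsto u Filter.atTop (nhdsWithin (0 : ℝ) {0}ᶜ) := by
      rw [tendsto_nhdsWithin_iff]
      constructor
      · simpa [hu] using tendsto_one_div_add_atTop_nhds_zero_nat (𝕜 := ℝ)
      · filter_upwards with n
        simp only [Set.mem_compl_iff, Set.mem_singleton_iff, hu]
        positivity
    have key : ∀ z, Filter.Tendsto
        (fun n => (v z (θ₀ + u n • e) - v z θ₀) * ((n : ℝ) + 1))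
        Filter.atTop (nhds (gv z θ₀ i)) := by
      intro z
      have hL : HasDerivAt (fun t : ℝ => θ₀ + t • e) e 0 := by
        simpa using ((hasDerivAt_id (0 : ℝ)).smul_const e).const_add θ₀
      have hcomp : HasDerivAt (fun t : ℝ => v z (θ₀ + t • e))
          (InnerProductSpace.toDual ℝ (EuclideanSpace ℝ (Fin p)) (gv z θ₀) e) 0 := by
        apply HasFDerivAt.comp_hasDerivAt _ _ hL
        simpa using hFd z θ₀
      have hval : InnerProductSpace.toDual ℝ (EuclideanSpace ℝ (Fin p)) (gv z θ₀) e
          = gv z θ₀ i := by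
        rw [InnerProductSpace.toDual_apply_apply, he, EuclideanSpace.inner_single_right]
        simp
      rw [hval] at hcomp
      have := (hasDerivAt_iff_tendsto_slope.mp hcomp).comp hu0
      refine this.congr fun n => ?_
      simp only [Function.comp_apply, slope_def_field]
      rw [div_eq_mul_inv]
      congr 1
      · simp
      · simp [hu]
    refine measurable_of_tendsto_metrizable
      (f := fun n ω => (v (Z ω) (θ₀ + u n • e) - v (Z ω) θ₀) * ((n : ℝ) + 1)) ?_ ?_
    · intro n
      exact ((hvθ _).sub (hvθ θ₀)).mul measurable_const
    · rw [tendsto_pi_nhds]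
      intro ω
      exact key (Z ω)
  -- the pointwise coefficient
  set c : Ω → ℝ := fun ω => (if X ω ≤ v (Z ω) θ₀ then (1 : ℝ) else 0) - β with hc
  have hcmeas : Measurable c :=
    (Measurable.ite (measurableSet_le hX (hvθ θ₀)) measurable_const measurable_const).sub
      measurable_const
  have hcbdd : ∀ ω, |c ω| ≤ 1 := by
    intro ω
    simp only [hc]
    split_ifs with h
    · rw [abs_le]; constructor <;> [linarith [hβ.2]; linarith [hβ.1]]
    · rw [abs_le]; constructor <;> [linarith [hβ.2]; linarith [hβ.1]]
  -- the pointwise Fréchet derivative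
  set F' : Ω → EuclideanSpace ℝ (Fin p) →L[ℝ] ℝ := fun ω =>
    c ω • (InnerProductSpace.toDual ℝ (EuclideanSpace ℝ (Fin p)) (gv (Z ω) θ₀)
      : EuclideanSpace ℝ (Fin p) →L[ℝ] ℝ) with hF'
  have hF'meas : AEStronglyMeasurable F' μ := by
    have h1 : Measurable (fun ω => (c ω, gv (Z ω) θ₀)) := hcmeas.prodMk hgvmeas
    have h2 : Continuous (fun q : ℝ × EuclideanSpace ℝ (Fin p) =>
        q.1 • (InnerProductSpace.toDual ℝ (EuclideanSpace ℝ (Fin p)) q.2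
          : EuclideanSpace ℝ (Fin p) →L[ℝ] ℝ)) := by
      exact continuous_fst.smul
        ((InnerProductSpace.toDual ℝ (EuclideanSpace ℝ (Fin p))).continuous.comp continuous_snd)
    exact h2.comp_aestronglyMeasurable h1.aestronglyMeasurable
  -- integrability of F θ₀
  obtain ⟨θ₁, hθ₁⟩ := hfin
  have hFdiff_int : Integrable
      (fun ω => SVaR β (v (Z ω) θ₀) (X ω) - SVaR β (v (Z ω) θ₁) (X ω)) μ := by
    apply Integrable.mono' (hV₁int.mul_const ‖θ₀ - θ₁‖)
      ((hFmeas θ₀).sub (hFmeas θ₁)).aestronglyMeasurable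
    filter_upwards with ω
    have := (hθlip ω).dist_le_mul θ₀ θ₁
    rw [Real.dist_eq, dist_eq_norm] at this
    simpa [Real.coe_nnabs, abs_of_nonneg (hV₁nonneg (Z ω))] using this
  have hFint : Integrable (fun ω => SVaR β (v (Z ω) θ₀) (X ω)) μ := by
    have h := hθ₁.add hFdiff_int
    refine h.congr (Filter.Eventually.of_forall fun ω => ?_)
    exact add_sub_cancel _ _
  -- a.e. differentiability at θ₀
  have h_diff : ∀ᵐ ω ∂μ, HasFDerivAt (fun θ => SVaR β (v (Z ω) θ) (X ω)) (F' ω) θ₀ := by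
    have hne_ae : ∀ᵐ ω ∂μ, X ω ≠ v (Z ω) θ₀ := by
      rw [MeasureTheory.ae_iff]
      simpa using hties
    filter_upwards [hne_ae] with ω hne
    have hbase : HasFDerivAt (fun θ => c ω * (v (Z ω) θ - X ω)) (F' ω) θ₀ :=
      ((hFd (Z ω) θ₀).sub_const (X ω)).const_mul (c ω)
    have hcont : ContinuousAt (v (Z ω)) θ₀ := (hFd (Z ω) θ₀).continuousAt
    rcases lt_or_gt_of_ne hne with h | h
    · -- X ω < v (Z ω) θ₀ : indicator is eventually 1
      have hev : ∀ᶠ θ in nhds θ₀, X ω < v (Z ω) θ := hcont.eventually (eventually_gt_nhds h)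
      apply hbase.congr_of_eventuallyEq
      filter_upwards [hev] with θ hθ
      simp [SVaR, hc, hθ.le, h.le]
    · -- v (Z ω) θ₀ < X ω : indicator is eventually 0
      have hev : ∀ᶠ θ in nhds θ₀, v (Z ω) θ < X ω := hcont.eventually (eventually_lt_nhds h)
      apply hbase.congr_of_eventuallyEq
      filter_upwards [hev] with θ hθ
      simp [SVaR, hc, not_le.mpr hθ, not_le.mpr h]
  -- a.e. local Lipschitz bound
  have h_lip : ∀ᵐ ω ∂μ, LipschitzOnWith (Real.nnabs (V₁ (Z ω)))
      (fun θ => SVaR β (v (Z ω) θ) (X ω)) (Metric.ball θ₀ 1) := by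
    filter_upwards with ω
    exact (hθlip ω).lipschitzOnWith
  have hF_meas : ∀ᶠ θ in nhds θ₀,
      AEStronglyMeasurable (fun ω => SVaR β (v (Z ω) θ) (X ω)) μ := by
    filter_upwards with θ
    exact (hFmeas θ).aestronglyMeasurable
  have key := hasFDerivAt_integral_of_dominated_loc_of_lip
    (F := fun θ ω => SVaR β (v (Z ω) θ) (X ω)) (F' := F') (bound := fun ω => V₁ (Z ω))
    (Metric.ball_mem_nhds θ₀ one_pos) hF_meas hFint hF'meas h_lip hV₁int h_diff
  rw [hasGradientAt_iff_hasFDerivAt]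
  -- integrability of the vector integrand
  have hInt2 : Integrable (fun ω => c ω • gv (Z ω) θ₀) μ := by
    apply Integrable.mono' hV₁int (hcmeas.smul hgvmeas).aestronglyMeasurable
    filter_upwards with ω
    show ‖c ω • gv (Z ω) θ₀‖ ≤ _
    rw [norm_smul]
    calc ‖c ω‖ * ‖gv (Z ω) θ₀‖ ≤ 1 * V₁ (Z ω) := by
          apply mul_le_mul (hcbdd ω) (hgv _ _) (norm_nonneg _) zero_le_one
      _ = V₁ (Z ω) := one_mul _
  have heq : ∫ ω, F' ω ∂μ
      = InnerProductSpace.toDual ℝ (EuclideanSpace ℝ (Fin p)) (∫ ω, c ω • gv (Z ω) θ₀ ∂μ) := by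
    refine ContinuousLinearMap.ext fun y => ?_
    rw [ContinuousLinearMap.integral_apply key.1]
    rw [InnerProductSpace.toDual_apply_apply, real_inner_comm, ← integral_inner hInt2]
    congr 1
    funext ω
    simp only [hF', ContinuousLinearMap.coe_smul', Pi.smul_apply,
      InnerProductSpace.toDual_apply_apply, smul_eq_mul, real_inner_smul_left]
    rw [real_inner_comm, real_inner_smul_right]
  rw [← heq]
  exact key.2
end

section
/- Let β ∈ (0,1), n, p ∈ ℕ, x₁,…,xₙ ∈ ℝ, and let v₁,…,vₙ : ℝᵖ → ℝ be continuously differentiable. Suppose θ̂ ∈ ℝᵖ is a local minimizer of Sₙ(θ) = Σ_{t=1}^n S^VaR(v_t(θ), x_t). Then for every coordinate j ∈ {1,…,p}, | Σ_{t=1}^n ∂_j v_t(θ̂)·(1{x_t ≤ v_t(θ̂)} − β) | ≤ Σ_{t=1}^n |∂_j v_t(θ̂)|·1{x_t = v_t(θ̂)}, where ∂_j v_t denotes the j-th partial derivative of v_t. -/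
open Filter Topology

lemma SVaR_eq_max {β : ℝ} (hβ : β ∈ Set.Ioo (0:ℝ) 1) (w x : ℝ) :
    SVaR β w x = max ((1-β)*(w-x)) (β*(x-w)) := by
  obtain ⟨h0, h1⟩ := hβ
  unfold SVaR
  rcases le_or_gt x w with h | h
  · rw [if_pos h, max_eq_left (by nlinarith)]
  · rw [if_neg (not_le.mpr h), max_eq_right (by nlinarith)]; ring

lemma slope_tendsto {β : ℝ} (hβ : β ∈ Set.Ioo (0:ℝ) 1) (x : ℝ) (g : ℝ → ℝ) (d : ℝ)
    (hg : HasDerivAt g d 0) :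
    Tendsto (fun s => (SVaR β (g s) x - SVaR β (g 0) x)/s) (𝓝[>] (0:ℝ))
      (𝓝 (if x = g 0 then max ((1-β)*d) ((-β)*d)
           else d * ((if x ≤ g 0 then (1:ℝ) else 0) - β))) := by
  have hq : Tendsto (fun s => (g s - g 0)/s) (𝓝[>] (0:ℝ)) (𝓝 d) := by
    have := hasDerivAt_iff_tendsto_slope.mp hg
    refine (this.mono_left (nhdsWithin_mono _ ?_)).congr (fun s => ?_)
    · intro s hs; exact ne_of_gt hs
    · simp [slope_def_field]
  by_cases hx : x = g 0
  · rw [if_pos hx]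
    have h0 : SVaR β (g 0) x = 0 := by simp [SVaR, hx]
    have hlim : Tendsto (fun s => max ((1-β)*((g s - g 0)/s)) ((-β)*((g s - g 0)/s)))
        (𝓝[>] (0:ℝ)) (𝓝 (max ((1-β)*d) ((-β)*d))) :=
      ((hq.const_mul (1-β)).max (hq.const_mul (-β)))
    refine hlim.congr' ?_
    filter_upwards [self_mem_nhdsWithin] with s hs
    rw [h0, sub_zero, SVaR_eq_max hβ, hx]
    rw [show β*(g 0 - g s) = (-β)*(g s - g 0) by ring,
        ← max_div_div_right (le_of_lt hs), mul_div_assoc, mul_div_assoc]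
  · rw [if_neg hx]
    have hderiv : HasDerivAt (fun s => SVaR β (g s) x)
        (d * ((if x ≤ g 0 then (1:ℝ) else 0) - β)) 0 := by
      rcases lt_or_gt_of_ne hx with hlt | hgt
      · have hev : ∀ᶠ s in 𝓝 (0:ℝ), SVaR β (g s) x = (1-β)*(g s - x) := by
          have hev' : ∀ᶠ s in 𝓝 (0:ℝ), x < g s :=
            hg.continuousAt.eventually (eventually_gt_nhds hlt)
          filter_upwards [hev'] with s hs
          unfold SVaR; rw [if_pos hs.le]
        have h' : HasDerivAt (fun s => (1-β)*(g s - x)) ((1-β)*d) 0 :=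
          ((hg.sub_const x).const_mul (1-β))
        rw [show d * ((if x ≤ g 0 then (1:ℝ) else 0) - β) = (1-β)*d by
          rw [if_pos hlt.le]; ring]
        exact h'.congr_of_eventuallyEq hev
      · have hev : ∀ᶠ s in 𝓝 (0:ℝ), SVaR β (g s) x = (0-β)*(g s - x) := by
          have hev' : ∀ᶠ s in 𝓝 (0:ℝ), g s < x :=
            hg.continuousAt.eventually (eventually_lt_nhds hgt)
          filter_upwards [hev'] with s hs
          unfold SVaR; rw [if_neg (not_le.mpr hs)]
        have h' : HasDerivAt (fun s => (0-β)*(g s - x)) ((0-β)*d) 0 :=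
          ((hg.sub_const x).const_mul (0-β))
        rw [show d * ((if x ≤ g 0 then (1:ℝ) else 0) - β) = (0-β)*d by
          rw [if_neg (not_le.mpr hgt)]; ring]
        exact h'.congr_of_eventuallyEq hev
    have := hasDerivAt_iff_tendsto_slope.mp hderiv
    refine (this.mono_left (nhdsWithin_mono _ ?_)).congr (fun s => ?_)
    · intro s hs; exact ne_of_gt hs
    · simp [slope_def_field]

lemma slope_tendsto' {β : ℝ} (hβ : β ∈ Set.Ioo (0:ℝ) 1) (x w : ℝ) (g : ℝ → ℝ) (d : ℝ)
    (hg : HasDerivAt g d 0) (hg0 : g 0 = w) :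
    Tendsto (fun s => (SVaR β (g s) x - SVaR β w x)/s) (𝓝[>] (0:ℝ))
      (𝓝 (if x = w then max ((1-β)*d) ((-β)*d)
           else d * ((if x ≤ w then (1:ℝ) else 0) - β))) := by
  subst hg0; exact slope_tendsto hβ x g d hg


/-- Deterministic first-order condition for nonlinear quantile regression (key step of
Lemma V.2): at a local minimizer `θ̂` of the empirical pinball criterion, each coordinate
of the (sub)gradient is bounded by the number of exact fits:
`|Σ_t ∂_j v_t(θ̂)·(1{x_t ≤ v_t(θ̂)} − β)| ≤ Σ_t |∂_j v_t(θ̂)|·1{x_t = v_t(θ̂)}`. -/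
theorem pinball_first_order_condition
    (β : ℝ) (hβ : β ∈ Set.Ioo (0 : ℝ) 1) (n p : ℕ)
    (x : Fin n → ℝ) (v : Fin n → EuclideanSpace ℝ (Fin p) → ℝ)
    (hv : ∀ t, ContDiff ℝ 1 (v t))
    (θ : EuclideanSpace ℝ (Fin p))
    (hmin : IsLocalMin (fun θ' => ∑ t, SVaR β (v t θ') (x t)) θ) :
    ∀ j : Fin p,
      |∑ t, fderiv ℝ (v t) θ (EuclideanSpace.single j 1)
          * ((if x t ≤ v t θ then (1 : ℝ) else 0) - β)|
        ≤ ∑ t, |fderiv ℝ (v t) θ (EuclideanSpace.single j 1)|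
          * (if x t = v t θ then (1 : ℝ) else 0) := by
  -- directional one-sided first-order condition
  have key : ∀ e : EuclideanSpace ℝ (Fin p),
      0 ≤ ∑ t, (if x t = v t θ
          then max ((1-β)*(fderiv ℝ (v t) θ e)) ((-β)*(fderiv ℝ (v t) θ e))
          else (fderiv ℝ (v t) θ e) * ((if x t ≤ v t θ then (1:ℝ) else 0) - β)) := by
    intro e
    have hc : Continuous (fun s : ℝ => θ + s • e) :=
      continuous_const.add (continuous_id.smul continuous_const)
    have hc0 : Tendsto (fun s : ℝ => θ + s • e) (𝓝 0) (𝓝 θ) := by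
      simpa using hc.tendsto 0
    have hpath : ∀ t, HasDerivAt (fun s : ℝ => v t (θ + s • e)) (fderiv ℝ (v t) θ e) 0 := by
      intro t
      have hgpath : HasDerivAt (fun s : ℝ => θ + s • e) e 0 := by
        simpa using ((hasDerivAt_id (0:ℝ)).smul_const e).const_add θ
      have hf : HasFDerivAt (v t) (fderiv ℝ (v t) θ) (θ + (0:ℝ) • e) := by
        simpa using (((hv t).differentiable one_ne_zero) θ).hasFDerivAt
      exact hf.comp_hasDerivAt 0 hgpath
    have hsum : Tendsto
        (fun s => ∑ t, (SVaR β (v t (θ + s • e)) (x t) - SVaR β (v t θ) (x t))/s)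
        (𝓝[>] (0:ℝ))
        (𝓝 (∑ t, (if x t = v t θ
          then max ((1-β)*(fderiv ℝ (v t) θ e)) ((-β)*(fderiv ℝ (v t) θ e))
          else (fderiv ℝ (v t) θ e) * ((if x t ≤ v t θ then (1:ℝ) else 0) - β)))) := by
      refine tendsto_finset_sum _ (fun t _ => ?_)
      exact slope_tendsto' hβ (x t) (v t θ) _ _ (hpath t) (by simp)
    have hev : ∀ᶠ s in 𝓝[>] (0:ℝ),
        0 ≤ ∑ t, (SVaR β (v t (θ + s • e)) (x t) - SVaR β (v t θ) (x t))/s := by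
      have hmin' : ∀ᶠ s in 𝓝 (0:ℝ),
          (∑ t, SVaR β (v t θ) (x t)) ≤ ∑ t, SVaR β (v t (θ + s • e)) (x t) :=
        hc0.eventually hmin
      filter_upwards [self_mem_nhdsWithin, hmin'.filter_mono nhdsWithin_le_nhds] with s hs hle
      rw [← Finset.sum_div, Finset.sum_sub_distrib]
      exact div_nonneg (sub_nonneg.2 hle) (le_of_lt hs)
    exact ge_of_tendsto hsum hev
  intro j
  set e : EuclideanSpace ℝ (Fin p) := EuclideanSpace.single j 1 with he
  set D : Fin n → ℝ := fun t => fderiv ℝ (v t) θ e with hD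
  have h1 := key e
  have h2 := key (-e)
  have hDneg : ∀ t, fderiv ℝ (v t) θ (-e) = -(D t) := fun t => map_neg _ _
  -- bound each summand
  have hb1 : ∑ t, (if x t = v t θ
        then max ((1-β)*(fderiv ℝ (v t) θ e)) ((-β)*(fderiv ℝ (v t) θ e))
        else (fderiv ℝ (v t) θ e) * ((if x t ≤ v t θ then (1:ℝ) else 0) - β))
      ≤ ∑ t, (D t * ((if x t ≤ v t θ then (1:ℝ) else 0) - β)
              + |D t| * (if x t = v t θ then (1:ℝ) else 0)) := by
    refine Finset.sum_le_sum (fun t _ => ?_)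
    by_cases hxt : x t = v t θ
    · rw [if_pos hxt, if_pos hxt, if_pos hxt.le]
      refine max_le ?_ ?_
      · nlinarith [abs_nonneg (D t)]
      · nlinarith [neg_abs_le (D t)]
    · rw [if_neg hxt, if_neg hxt]
      simp [hD]
  have hb2 : ∑ t, (if x t = v t θ
        then max ((1-β)*(fderiv ℝ (v t) θ (-e))) ((-β)*(fderiv ℝ (v t) θ (-e)))
        else (fderiv ℝ (v t) θ (-e)) * ((if x t ≤ v t θ then (1:ℝ) else 0) - β))
      ≤ ∑ t, (-(D t * ((if x t ≤ v t θ then (1:ℝ) else 0) - β))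
              + |D t| * (if x t = v t θ then (1:ℝ) else 0)) := by
    refine Finset.sum_le_sum (fun t _ => ?_)
    rw [hDneg t]
    by_cases hxt : x t = v t θ
    · rw [if_pos hxt, if_pos hxt, if_pos hxt.le]
      refine max_le ?_ ?_
      · nlinarith [abs_nonneg (D t)]
      · nlinarith [le_abs_self (D t)]
    · rw [if_neg hxt, if_neg hxt]
      simp
  rw [Finset.sum_add_distrib] at hb1 hb2
  rw [Finset.sum_neg_distrib] at hb2
  have hA1 : -(∑ t, |D t| * (if x t = v t θ then (1:ℝ) else 0))
      ≤ ∑ t, D t * ((if x t ≤ v t θ then (1:ℝ) else 0) - β) := by linarith [le_trans h1 hb1]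
  have hA2 : ∑ t, D t * ((if x t ≤ v t θ then (1:ℝ) else 0) - β)
      ≤ ∑ t, |D t| * (if x t = v t θ then (1:ℝ) else 0) := by linarith [le_trans h2 hb2]
  exact abs_le.mpr ⟨hA1, hA2⟩
end

section
/- Let (Ω, 𝓐, μ) be a probability space with Z : Ω → ℝᵏ and X : Ω → ℝ measurable, and suppose X has a conditional density bounded by K given Z. Let v̲, v̄ : ℝᵏ → ℝ be measurable with v̲(z) ≤ v̄(z) for all z, and let W : ℝᵏ → [0,∞) be measurable with E[(v̄(Z) − v̲(Z))·W(Z)] < ∞. Then E[(1{X ≤ v̄(Z)} − 1{X ≤ v̲(Z)})·W(Z)] ≤ K·E[(v̄(Z) − v̲(Z))·W(Z)]. -/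
open MeasureTheory ProbabilityTheory

/-- Weighted indicator-difference bound: if `X` has a conditional density bounded by `K`
given `Z`, and `v̲ ≤ v̄` are measurable threshold functions, then for every measurable
weight `W ≥ 0` with `E[(v̄(Z) − v̲(Z))·W(Z)] < ∞`,
`E[(1{X ≤ v̄(Z)} − 1{X ≤ v̲(Z)})·W(Z)] ≤ K·E[(v̄(Z) − v̲(Z))·W(Z)]`. -/
theorem indicator_diff_weighted_bound
    {Ω : Type*} [MeasurableSpace Ω] (μ : Measure Ω) [IsProbabilityMeasure μ]
    {k : ℕ}
    (Z : Ω → EuclideanSpace ℝ (Fin k)) (hZ : Measurable Z)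
    (X : Ω → ℝ) (hX : Measurable X)
    (K : ℝ)
    (κ : Kernel (EuclideanSpace ℝ (Fin k)) ℝ) [IsMarkovKernel κ]
    (f : EuclideanSpace ℝ (Fin k) → ℝ → ℝ)
    (hfmeas : Measurable fun zx : EuclideanSpace ℝ (Fin k) × ℝ => f zx.1 zx.2)
    (hfnn : ∀ z x, 0 ≤ f z x)
    (hjoint : Measure.map (fun ω => (Z ω, X ω)) μ = (Measure.map Z μ).compProd κ)
    (hdens : ∀ᵐ z ∂(Measure.map Z μ),
      κ z = (volume : Measure ℝ).withDensity (fun x => ENNReal.ofReal (f z x))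
        ∧ ∀ x, f z x ≤ K)
    (vlo vhi : EuclideanSpace ℝ (Fin k) → ℝ)
    (hvlo : Measurable vlo) (hvhi : Measurable vhi)
    (hle : ∀ z, vlo z ≤ vhi z)
    (W : EuclideanSpace ℝ (Fin k) → ℝ) (hW : Measurable W) (hWnn : ∀ z, 0 ≤ W z)
    (hint : Integrable (fun ω => (vhi (Z ω) - vlo (Z ω)) * W (Z ω)) μ) :
    ∫ ω, ((if X ω ≤ vhi (Z ω) then (1 : ℝ) else 0)
        - (if X ω ≤ vlo (Z ω) then (1 : ℝ) else 0)) * W (Z ω) ∂μ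
      ≤ K * ∫ ω, (vhi (Z ω) - vlo (Z ω)) * W (Z ω) ∂μ := by
  classical
  have hmapprob : IsProbabilityMeasure (Measure.map Z μ) :=
    Measure.isProbabilityMeasure_map hZ.aemeasurable
  have hK : 0 ≤ K := by
    obtain ⟨z, hz⟩ := hdens.exists
    exact le_trans (hfnn z 0) (hz.2 0)
  set I : ℝ := ∫ ω, (vhi (Z ω) - vlo (Z ω)) * W (Z ω) ∂μ with hI
  have hInn : 0 ≤ I :=
    integral_nonneg fun ω => mul_nonneg (sub_nonneg.2 (hle _)) (hWnn _)
  -- pointwise rewriting of the indicator difference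
  have hpt : ∀ ω, ((if X ω ≤ vhi (Z ω) then (1 : ℝ) else 0)
      - (if X ω ≤ vlo (Z ω) then (1 : ℝ) else 0)) * W (Z ω)
      = (if vlo (Z ω) < X ω ∧ X ω ≤ vhi (Z ω) then (1 : ℝ) else 0) * W (Z ω) := by
    intro ω
    rcases le_or_gt (X ω) (vlo (Z ω)) with h1 | h1
    · have h2 : X ω ≤ vhi (Z ω) := h1.trans (hle _)
      simp [h1, h2, not_lt.2 h1]
    rcases le_or_gt (X ω) (vhi (Z ω)) with h2 | h2
    · simp [not_le.2 h1, h2, h1]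
    · simp [not_le.2 h1, not_le.2 h2]
  -- measurable kernel-side function
  set G : (EuclideanSpace ℝ (Fin k) × ℝ) → ENNReal :=
    fun p => if vlo p.1 < p.2 ∧ p.2 ≤ vhi p.1 then ENNReal.ofReal (W p.1) else 0 with hGdef
  have hGset : MeasurableSet {p : EuclideanSpace ℝ (Fin k) × ℝ |
      vlo p.1 < p.2 ∧ p.2 ≤ vhi p.1} :=
    (measurableSet_lt (hvlo.comp measurable_fst) measurable_snd).inter
      (measurableSet_le measurable_snd (hvhi.comp measurable_fst))
  have hG : Measurable G :=
    Measurable.ite hGset (ENNReal.measurable_ofReal.comp (hW.comp measurable_fst))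
      measurable_const
  -- the integrand (in indicator-ioc form) is nonneg and measurable
  have hmeasInd : Measurable fun ω =>
      (if vlo (Z ω) < X ω ∧ X ω ≤ vhi (Z ω) then (1 : ℝ) else 0) * W (Z ω) := by
    have hs : MeasurableSet {ω | vlo (Z ω) < X ω ∧ X ω ≤ vhi (Z ω)} :=
      ((hZ.prodMk hX) hGset)
    exact (Measurable.ite hs measurable_const measurable_const).mul (hW.comp hZ)
  have hnn : 0 ≤ᵐ[μ] fun ω =>
      (if vlo (Z ω) < X ω ∧ X ω ≤ vhi (Z ω) then (1 : ℝ) else 0) * W (Z ω) := by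
    filter_upwards with ω
    exact mul_nonneg (by split_ifs <;> norm_num) (hWnn _)
  have hLHS : ∫ ω, ((if X ω ≤ vhi (Z ω) then (1 : ℝ) else 0)
        - (if X ω ≤ vlo (Z ω) then (1 : ℝ) else 0)) * W (Z ω) ∂μ
      = (∫⁻ ω, G (Z ω, X ω) ∂μ).toReal := by
    rw [integral_congr_ae (Filter.Eventually.of_forall hpt),
      integral_eq_lintegral_of_nonneg_ae hnn hmeasInd.aestronglyMeasurable]
    congr 1
    refine lintegral_congr fun ω => ?_
    simp only [hGdef]
    split_ifs <;> simp
  -- move to the joint law and disintegrate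
  have hjointG : ∫⁻ ω, G (Z ω, X ω) ∂μ
      = ∫⁻ z, ∫⁻ x, G (z, x) ∂(κ z) ∂(Measure.map Z μ) := by
    rw [← Measure.lintegral_compProd hG, ← hjoint, lintegral_map hG (hZ.prodMk hX)]
  -- a.e. bound on the inner integral
  have hinner : ∀ᵐ z ∂(Measure.map Z μ),
      ∫⁻ x, G (z, x) ∂(κ z)
        ≤ ENNReal.ofReal K * ENNReal.ofReal ((vhi z - vlo z) * W z) := by
    filter_upwards [hdens] with z hz
    have h1 : (fun x => G (z, x))
        = (Set.Ioc (vlo z) (vhi z)).indicator fun _ => ENNReal.ofReal (W z) := by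
      funext x
      simp only [hGdef, Set.indicator, Set.mem_Ioc]
    have h2 : ∫⁻ x, G (z, x) ∂(κ z)
        = ENNReal.ofReal (W z) * κ z (Set.Ioc (vlo z) (vhi z)) := by
      rw [h1, lintegral_indicator measurableSet_Ioc, setLIntegral_const]
    have h3 : κ z (Set.Ioc (vlo z) (vhi z))
        ≤ ENNReal.ofReal K * ENNReal.ofReal (vhi z - vlo z) := by
      rw [hz.1, withDensity_apply _ measurableSet_Ioc]
      calc ∫⁻ x in Set.Ioc (vlo z) (vhi z), ENNReal.ofReal (f z x)
          ≤ ∫⁻ _ in Set.Ioc (vlo z) (vhi z), ENNReal.ofReal K :=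
            lintegral_mono fun x => ENNReal.ofReal_le_ofReal (hz.2 x)
        _ = ENNReal.ofReal K * volume (Set.Ioc (vlo z) (vhi z)) := setLIntegral_const _ _
        _ = ENNReal.ofReal K * ENNReal.ofReal (vhi z - vlo z) := by
            rw [Real.volume_Ioc]
    calc ∫⁻ x, G (z, x) ∂(κ z)
        = ENNReal.ofReal (W z) * κ z (Set.Ioc (vlo z) (vhi z)) := h2
      _ ≤ ENNReal.ofReal (W z) * (ENNReal.ofReal K * ENNReal.ofReal (vhi z - vlo z)) :=
          mul_le_mul_right h3 _
      _ = ENNReal.ofReal K * ENNReal.ofReal ((vhi z - vlo z) * W z) := by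
          rw [ENNReal.ofReal_mul (sub_nonneg.2 (hle z))]
          ring
  -- assemble
  have hRHS : ∫⁻ z, ENNReal.ofReal ((vhi z - vlo z) * W z) ∂(Measure.map Z μ)
      = ENNReal.ofReal I := by
    rw [lintegral_map (f := fun z => ENNReal.ofReal ((vhi z - vlo z) * W z))
        (((hvhi.sub hvlo).mul hW).ennreal_ofReal) hZ,
      ← ofReal_integral_eq_lintegral_ofReal hint]
    filter_upwards with ω
    exact mul_nonneg (sub_nonneg.2 (hle _)) (hWnn _)
  have hbound : ∫⁻ ω, G (Z ω, X ω) ∂μ ≤ ENNReal.ofReal (K * I) := by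
    rw [hjointG]
    calc ∫⁻ z, ∫⁻ x, G (z, x) ∂(κ z) ∂(Measure.map Z μ)
        ≤ ∫⁻ z, ENNReal.ofReal K * ENNReal.ofReal ((vhi z - vlo z) * W z)
            ∂(Measure.map Z μ) := lintegral_mono_ae hinner
      _ = ENNReal.ofReal K
            * ∫⁻ z, ENNReal.ofReal ((vhi z - vlo z) * W z) ∂(Measure.map Z μ) :=
          lintegral_const_mul' _ _ ENNReal.ofReal_ne_top
      _ = ENNReal.ofReal K * ENNReal.ofReal I := by rw [hRHS]
      _ = ENNReal.ofReal (K * I) := (ENNReal.ofReal_mul hK).symm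
  rw [hLHS]
  calc (∫⁻ ω, G (Z ω, X ω) ∂μ).toReal
      ≤ (ENNReal.ofReal (K * I)).toReal :=
        ENNReal.toReal_mono ENNReal.ofReal_ne_top hbound
    _ = K * I := ENNReal.toReal_ofReal (mul_nonneg hK hInn)
end

section
/- Let (Ω, 𝓐, μ) be a probability space with Z : Ω → ℝᵏ and X, Y : Ω → ℝ measurable, and suppose X has a conditional density bounded by K given Z. Let δ > 0 and let v̲, v̄ : ℝᵏ → ℝ be measurable with v̲(z) ≤ v̄(z) and v̄(z) − v̲(z) ≤ 2δ·V₁(z) for all z, where V₁ : ℝᵏ → [0,∞) is measurable with E[V₁(Z)] < ∞. Let q > 1, p = q/(q−1), and assume E[|Y|^{2q}] < ∞. Then E[(1{X > v̲(Z)} − 1{X > v̄(Z)})·Y²] ≤ (2Kδ·E[V₁(Z)])^{1/p}·(E[|Y|^{2q}])^{1/q}. -/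
open MeasureTheory ProbabilityTheory

/-- Hölder-type bound (display B₁₂ₜ of the consistency proof): if `X` has a conditional
density bounded by `K` given `Z`, and `v̲ ≤ v̄` with `v̄ − v̲ ≤ 2δ·V₁` for an integrable
`V₁ ≥ 0`, then for `q > 1` and `p = q/(q−1)`,
`E[(1{X > v̲(Z)} − 1{X > v̄(Z)})·Y²] ≤ (2Kδ·E[V₁(Z)])^{1/p}·(E[|Y|^{2q}])^{1/q}`. -/
theorem indicator_diff_squared_outcome_bound
    {Ω : Type*} [MeasurableSpace Ω] (μ : Measure Ω) [IsProbabilityMeasure μ]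
    {k : ℕ}
    (Z : Ω → EuclideanSpace ℝ (Fin k)) (hZ : Measurable Z)
    (X Y : Ω → ℝ) (hX : Measurable X) (hY : Measurable Y)
    (K : ℝ)
    (κ : Kernel (EuclideanSpace ℝ (Fin k)) ℝ) [IsMarkovKernel κ]
    (f : EuclideanSpace ℝ (Fin k) → ℝ → ℝ)
    (hfmeas : Measurable fun zx : EuclideanSpace ℝ (Fin k) × ℝ => f zx.1 zx.2)
    (hfnn : ∀ z x, 0 ≤ f z x)
    (hjoint : Measure.map (fun ω => (Z ω, X ω)) μ = (Measure.map Z μ).compProd κ)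
    (hdens : ∀ᵐ z ∂(Measure.map Z μ),
      κ z = (volume : Measure ℝ).withDensity (fun x => ENNReal.ofReal (f z x))
        ∧ ∀ x, f z x ≤ K)
    (δ : ℝ) (hδ : 0 < δ)
    (vlo vhi : EuclideanSpace ℝ (Fin k) → ℝ)
    (hvlo : Measurable vlo) (hvhi : Measurable vhi)
    (V₁ : EuclideanSpace ℝ (Fin k) → ℝ) (hV₁meas : Measurable V₁)
    (hV₁nn : ∀ z, 0 ≤ V₁ z)
    (hle : ∀ z, vlo z ≤ vhi z)
    (hsep : ∀ z, vhi z - vlo z ≤ 2 * δ * V₁ z)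
    (hV₁int : Integrable (fun ω => V₁ (Z ω)) μ)
    (q : ℝ) (hq : 1 < q) (p : ℝ) (hp : p = q / (q - 1))
    (hYint : Integrable (fun ω => |Y ω| ^ (2 * q)) μ) :
    ∫ ω, ((if vlo (Z ω) < X ω then (1 : ℝ) else 0)
        - (if vhi (Z ω) < X ω then (1 : ℝ) else 0)) * (Y ω) ^ 2 ∂μ
      ≤ (2 * K * δ * ∫ ω, V₁ (Z ω) ∂μ) ^ (1 / p)
        * (∫ ω, |Y ω| ^ (2 * q) ∂μ) ^ (1 / q) := by

  -- setup
  set ν := Measure.map Z μ with hν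
  have hνprob : IsProbabilityMeasure ν := Measure.isProbabilityMeasure_map hZ.aemeasurable
  -- K is nonnegative
  have hK : 0 ≤ K := by
    obtain ⟨z, -, hz2⟩ := hdens.exists
    exact (hfnn z 0).trans (hz2 0)
  -- the set A and indicator g
  set A : Set Ω := {ω | vlo (Z ω) < X ω ∧ X ω ≤ vhi (Z ω)} with hA
  have hAmeas : MeasurableSet A :=
    (measurableSet_lt (hvlo.comp hZ) hX).inter (measurableSet_le hX (hvhi.comp hZ))
  set g : Ω → ℝ := A.indicator (fun _ => 1) with hg
  have hgmeas : Measurable g := measurable_one.indicator hAmeas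
  have hg01 : ∀ ω, g ω = 0 ∨ g ω = 1 := by
    intro ω; by_cases h : ω ∈ A
    · right; simp [hg, Set.indicator_of_mem h]
    · left; simp [hg, Set.indicator_of_notMem h]
  -- rewrite the integrand
  have hcongr : ∀ ω, ((if vlo (Z ω) < X ω then (1 : ℝ) else 0)
      - (if vhi (Z ω) < X ω then (1 : ℝ) else 0)) * (Y ω) ^ 2 = g ω * (Y ω) ^ 2 := by
    intro ω
    have : ((if vlo (Z ω) < X ω then (1 : ℝ) else 0)
        - (if vhi (Z ω) < X ω then (1 : ℝ) else 0)) = g ω := by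
      by_cases h1 : vhi (Z ω) < X ω
      · have h2 : vlo (Z ω) < X ω := lt_of_le_of_lt (hle _) h1
        have : ω ∉ A := by simp [hA]; intro _; exact h1
        simp [h1, h2, hg, Set.indicator_of_notMem this]
      · by_cases h2 : vlo (Z ω) < X ω
        · have : ω ∈ A := ⟨h2, not_lt.mp h1⟩
          simp [h1, h2, hg, Set.indicator_of_mem this]
        · have : ω ∉ A := by simp [hA]; intro h; exact absurd h h2
          simp [h1, h2, hg, Set.indicator_of_notMem this]
    rw [this]
  -- conjugate exponents
  have hpq : p.HolderConjugate q := by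
    rw [hp]; exact (Real.HolderConjugate.conjExponent hq).symm
  -- Memℒp facts
  have hgmem : MemLp g (ENNReal.ofReal p) μ := by
    refine MemLp.of_bound hgmeas.aestronglyMeasurable 1 (Filter.Eventually.of_forall fun ω => ?_)
    rcases hg01 ω with h | h <;> simp [h]
  have hY2mem : MemLp (fun ω => (Y ω) ^ 2) (ENNReal.ofReal q) μ := by
    have hq0 : ENNReal.ofReal q ≠ 0 := by
      simp [ENNReal.ofReal_eq_zero, not_le]; linarith
    have hqt : ENNReal.ofReal q ≠ ⊤ := ENNReal.ofReal_ne_top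
    have hsm : AEStronglyMeasurable (fun ω => (Y ω) ^ 2) μ := (hY.pow_const 2).aestronglyMeasurable
    have key : MemLp (fun ω => ‖(Y ω) ^ 2‖ ^ (ENNReal.ofReal q).toReal)
        (ENNReal.ofReal q / ENNReal.ofReal q) μ := by
      rw [ENNReal.div_self hq0 hqt, memLp_one_iff_integrable]
      have : (fun ω => ‖(Y ω) ^ 2‖ ^ (ENNReal.ofReal q).toReal)
          = fun ω => |Y ω| ^ (2 * q) := by
        funext ω
        rw [ENNReal.toReal_ofReal (by linarith : (0:ℝ) ≤ q)]
        rw [Real.norm_eq_abs, abs_pow, ← Real.rpow_natCast (|Y ω|) 2,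
          ← Real.rpow_mul (abs_nonneg _)]
        norm_num
      rw [this]; exact hYint
    exact (memLp_norm_rpow_iff hsm hq0 hqt).mp key
  -- Hölder
  have hholder : ∫ ω, g ω * (Y ω) ^ 2 ∂μ
      ≤ (∫ ω, g ω ^ p ∂μ) ^ (1 / p) * (∫ ω, ((Y ω) ^ 2) ^ q ∂μ) ^ (1 / q) := by
    refine integral_mul_le_Lp_mul_Lq_of_nonneg hpq ?_ ?_ hgmem hY2mem
    · exact Filter.Eventually.of_forall fun ω => by rcases hg01 ω with h | h <;> simp [h]
    · exact Filter.Eventually.of_forall fun ω => sq_nonneg _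
  -- identify the two integrals in Hölder's bound
  have hgp : (fun ω => g ω ^ p) = g := by
    funext ω
    rcases hg01 ω with h | h
    · rw [h, Real.zero_rpow hpq.ne_zero]
    · rw [h, Real.one_rpow]
  have hY2q : (fun ω => ((Y ω) ^ 2) ^ q) = fun ω => |Y ω| ^ (2 * q) := by
    funext ω
    rw [← sq_abs, ← Real.rpow_natCast (|Y ω|) 2, ← Real.rpow_mul (abs_nonneg _)]
    norm_num
  have hgint : ∫ ω, g ω ∂μ = (μ A).toReal := by
    rw [hg]; exact integral_indicator_one hAmeas
  -- bound the measure of A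
  have hSmeas : MeasurableSet {zx : EuclideanSpace ℝ (Fin k) × ℝ |
      vlo zx.1 < zx.2 ∧ zx.2 ≤ vhi zx.1} :=
    (measurableSet_lt (hvlo.comp measurable_fst) measurable_snd).inter
      (measurableSet_le measurable_snd (hvhi.comp measurable_fst))
  have hμA : μ A = ∫⁻ z, κ z (Set.Ioc (vlo z) (vhi z)) ∂ν := by
    have : A = (fun ω => (Z ω, X ω)) ⁻¹' {zx | vlo zx.1 < zx.2 ∧ zx.2 ≤ vhi zx.1} := rfl
    rw [this, ← Measure.map_apply (hZ.prodMk hX) hSmeas, hjoint,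
      Measure.compProd_apply hSmeas]
    rfl
  have hbound : ∀ᵐ z ∂ν, κ z (Set.Ioc (vlo z) (vhi z))
      ≤ ENNReal.ofReal (2 * K * δ * V₁ z) := by
    filter_upwards [hdens] with z ⟨hz1, hz2⟩
    rw [hz1, withDensity_apply _ measurableSet_Ioc]
    calc ∫⁻ x in Set.Ioc (vlo z) (vhi z), ENNReal.ofReal (f z x) ∂volume
        ≤ ∫⁻ _ in Set.Ioc (vlo z) (vhi z), ENNReal.ofReal K ∂volume :=
          lintegral_mono fun x => ENNReal.ofReal_le_ofReal (hz2 x)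
      _ = ENNReal.ofReal K * volume (Set.Ioc (vlo z) (vhi z)) := by
          rw [setLIntegral_const, mul_comm]
      _ = ENNReal.ofReal K * ENNReal.ofReal (vhi z - vlo z) := by
          rw [Real.volume_Ioc]
      _ ≤ ENNReal.ofReal K * ENNReal.ofReal (2 * δ * V₁ z) := by
          exact mul_le_mul_right (ENNReal.ofReal_le_ofReal (hsep z)) _
      _ = ENNReal.ofReal (2 * K * δ * V₁ z) := by
          rw [← ENNReal.ofReal_mul hK]; ring_nf
  have hV₁ν : Integrable V₁ ν :=
    (integrable_map_measure hV₁meas.aestronglyMeasurable hZ.aemeasurable).mpr hV₁int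
  have hintν : ∫ z, V₁ z ∂ν = ∫ ω, V₁ (Z ω) ∂μ :=
    integral_map hZ.aemeasurable hV₁meas.aestronglyMeasurable
  have hμA_le : μ A ≤ ENNReal.ofReal (2 * K * δ * ∫ ω, V₁ (Z ω) ∂μ) := by
    rw [hμA]
    calc ∫⁻ z, κ z (Set.Ioc (vlo z) (vhi z)) ∂ν
        ≤ ∫⁻ z, ENNReal.ofReal (2 * K * δ * V₁ z) ∂ν := lintegral_mono_ae hbound
      _ = ENNReal.ofReal (∫ z, 2 * K * δ * V₁ z ∂ν) := by
          rw [← ofReal_integral_eq_lintegral_ofReal (hV₁ν.const_mul _)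
            (Filter.Eventually.of_forall fun z =>
              mul_nonneg (by positivity) (hV₁nn z))]
      _ = ENNReal.ofReal (2 * K * δ * ∫ ω, V₁ (Z ω) ∂μ) := by
          rw [integral_const_mul, hintν]
  have htoReal : (μ A).toReal ≤ 2 * K * δ * ∫ ω, V₁ (Z ω) ∂μ := by
    refine ENNReal.toReal_le_of_le_ofReal ?_ hμA_le
    have : 0 ≤ ∫ ω, V₁ (Z ω) ∂μ := integral_nonneg fun ω => hV₁nn (Z ω)
    positivity
  -- conclude
  calc ∫ ω, ((if vlo (Z ω) < X ω then (1 : ℝ) else 0)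
        - (if vhi (Z ω) < X ω then (1 : ℝ) else 0)) * (Y ω) ^ 2 ∂μ
      = ∫ ω, g ω * (Y ω) ^ 2 ∂μ := by
        exact integral_congr_ae (Filter.Eventually.of_forall hcongr)
    _ ≤ (∫ ω, g ω ^ p ∂μ) ^ (1 / p) * (∫ ω, ((Y ω) ^ 2) ^ q ∂μ) ^ (1 / q) := hholder
    _ = ((μ A).toReal) ^ (1 / p) * (∫ ω, |Y ω| ^ (2 * q) ∂μ) ^ (1 / q) := by
        rw [hgp, hgint, hY2q]
    _ ≤ (2 * K * δ * ∫ ω, V₁ (Z ω) ∂μ) ^ (1 / p)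
        * (∫ ω, |Y ω| ^ (2 * q) ∂μ) ^ (1 / q) := by
        apply mul_le_mul_of_nonneg_right
        · exact Real.rpow_le_rpow ENNReal.toReal_nonneg htoReal hpq.one_div_nonneg
        · exact Real.rpow_nonneg (integral_nonneg fun ω => by positivity) _
end

section
/- Let (Ω, 𝓐, μ) be a probability space with Z : Ω → ℝᵏ and X : Ω → ℝ measurable, and suppose the joint law of (Z,X) equals ν ⊗ κ, where ν is the law of Z and κ is a Markov kernel such that for ν-almost every z, κ(z) has a Lebesgue density f(z,·) with |f(z,x) − f(z,x′)| ≤ K·|x − x′| for all x, x′ ∈ ℝ. Then for every measurable v : ℝᵏ → ℝ, every integrable W : ℝᵏ → ℝ (with W(Z)·f(Z, v(Z)) integrable), and every c > 0, | E[ W(Z)·(2c)^{−1}·1{|X − v(Z)| < c} ] − E[ W(Z)·f(Z, v(Z)) ] | ≤ K·c·E[|W(Z)|]. -/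
open MeasureTheory ProbabilityTheory

lemma kernel_bias_pointwise (K c a : ℝ) (hc : 0 < c) (g : ℝ → ℝ)
    (hg : Measurable g) (hgnn : ∀ x, 0 ≤ g x)
    (hlip : ∀ x x', |g x - g x'| ≤ K * |x - x'|)
    (m : Measure ℝ) (hm : m = (volume : Measure ℝ).withDensity fun x => ENNReal.ofReal (g x))
    (hfin : m (Metric.ball a c) ≠ ⊤) :
    |(2 * c)⁻¹ * (m (Metric.ball a c)).toReal - g a| ≤ K * c := by
  set s := Metric.ball a c with hsdef
  have hs : MeasurableSet s := measurableSet_ball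
  have hvol : (volume : Measure ℝ) s = ENNReal.ofReal (2 * c) := Real.volume_ball a c
  have hms : m s = ∫⁻ x in s, ENNReal.ofReal (g x) := by
    rw [hm, withDensity_apply _ hs]
  have hint : IntegrableOn g s volume := by
    refine ⟨hg.aestronglyMeasurable.restrict, ?_⟩
    unfold HasFiniteIntegral
    have : ∀ x, ‖g x‖ₑ = ENNReal.ofReal (g x) := fun x =>
      Real.enorm_eq_ofReal (hgnn x)
    simp_rw [this]
    rw [← hms]
    exact hfin.lt_top
  have htoReal : (m s).toReal = ∫ x in s, g x := by
    rw [hms, integral_eq_lintegral_of_nonneg_ae (Filter.Eventually.of_forall hgnn)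
      hg.aestronglyMeasurable.restrict]
  have hconst : ∫ _x in s, g a ∂volume = (2 * c) * g a := by
    rw [setIntegral_const, measureReal_def, hvol, ENNReal.toReal_ofReal (by positivity), smul_eq_mul]
  have hsub : ∫ x in s, (g x - g a) = (m s).toReal - 2 * c * g a := by
    rw [integral_sub hint (Iff.mpr integrableOn_const_iff (Or.inr (by rw [hvol]; exact ENNReal.ofReal_lt_top))),
      htoReal, hconst]
  have hbound : |∫ x in s, (g x - g a)| ≤ 2 * c * (K * c) := by
    calc |∫ x in s, (g x - g a)| ≤ ∫ x in s, |g x - g a| := by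
          simpa [Real.norm_eq_abs] using norm_integral_le_integral_norm (fun x => g x - g a)
      _ ≤ ∫ _x in s, K * c ∂volume := by
          refine setIntegral_mono_on (hint.sub (Iff.mpr integrableOn_const_iff (Or.inr (by
            rw [hvol]; exact ENNReal.ofReal_lt_top)))).abs
            (Iff.mpr integrableOn_const_iff (Or.inr (by rw [hvol]; exact ENNReal.ofReal_lt_top))) hs ?_
          intro x hx
          have hxa : |x - a| < c := by
            have := Metric.mem_ball.mp hx
            rwa [Real.dist_eq] at this
          calc |g x - g a| ≤ K * |x - a| := hlip x a
            _ ≤ K * c := by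
                have hK : 0 ≤ K := by
                  by_contra h
                  push_neg at h
                  have h1 := hlip 0 1
                  simp at h1
                  nlinarith [abs_nonneg (g 0 - g 1)]
                nlinarith
      _ = 2 * c * (K * c) := by
          rw [setIntegral_const, measureReal_def, hvol, ENNReal.toReal_ofReal (by positivity), smul_eq_mul]
  have key : (2 * c)⁻¹ * (m s).toReal - g a = (2 * c)⁻¹ * ∫ x in s, (g x - g a) := by
    rw [hsub]; field_simp
  rw [key, abs_mul, abs_of_nonneg (by positivity : (0:ℝ) ≤ (2 * c)⁻¹)]
  calc (2 * c)⁻¹ * |∫ x in s, (g x - g a)| ≤ (2 * c)⁻¹ * (2 * c * (K * c)) := by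
        gcongr
    _ = K * c := by field_simp

/-- Conditional kernel-bias bound with a random center `v(Z)` and `𝓖`-measurable weight
`W(Z)`: if the joint law of `(Z,X)` is `ν ⊗ₘ κ`, where `κ z` has a Lebesgue density
`f(z,·)` that is `K`-Lipschitz for `ν`-a.e. `z`, then for every measurable `v`, every
integrable `W` (with `W(Z)·f(Z,v(Z))` integrable), and every bandwidth `c > 0`,
`|E[W(Z)·(2c)⁻¹·1{|X − v(Z)| < c}] − E[W(Z)·f(Z,v(Z))]| ≤ K·c·E[|W(Z)|]`. -/
theorem conditional_kernel_bias_bound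
    {Ω : Type*} [MeasurableSpace Ω] (μ : Measure Ω) [IsProbabilityMeasure μ]
    {k : ℕ}
    (Z : Ω → EuclideanSpace ℝ (Fin k)) (hZ : Measurable Z)
    (X : Ω → ℝ) (hX : Measurable X)
    (K : ℝ)
    (κ : Kernel (EuclideanSpace ℝ (Fin k)) ℝ) [IsMarkovKernel κ]
    (f : EuclideanSpace ℝ (Fin k) → ℝ → ℝ)
    (hfmeas : Measurable fun zx : EuclideanSpace ℝ (Fin k) × ℝ => f zx.1 zx.2)
    (hfnn : ∀ z x, 0 ≤ f z x)
    (hjoint : Measure.map (fun ω => (Z ω, X ω)) μ = (Measure.map Z μ).compProd κ)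
    (hdens : ∀ᵐ z ∂(Measure.map Z μ),
      κ z = (volume : Measure ℝ).withDensity (fun x => ENNReal.ofReal (f z x))
        ∧ ∀ x x' : ℝ, |f z x - f z x'| ≤ K * |x - x'|) :
    ∀ v : EuclideanSpace ℝ (Fin k) → ℝ, Measurable v →
    ∀ W : EuclideanSpace ℝ (Fin k) → ℝ, Measurable W →
      Integrable (fun ω => W (Z ω)) μ →
      Integrable (fun ω => W (Z ω) * f (Z ω) (v (Z ω))) μ →
    ∀ c > (0 : ℝ),
      |(∫ ω, W (Z ω) * (2 * c)⁻¹ * (if |X ω - v (Z ω)| < c then (1 : ℝ) else 0) ∂μ)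
        - ∫ ω, W (Z ω) * f (Z ω) (v (Z ω)) ∂μ|
      ≤ K * c * ∫ ω, |W (Z ω)| ∂μ := by
  intro v hv W hW hWZint hWfint c hc
  set ν : Measure (EuclideanSpace ℝ (Fin k)) := Measure.map Z μ with hνdef
  have hνprob : IsProbabilityMeasure ν := Measure.isProbabilityMeasure_map hZ.aemeasurable
  -- integrability of W over ν
  have hWν : Integrable W ν :=
    (integrable_map_measure hW.aestronglyMeasurable hZ.aemeasurable).mpr hWZint
  have hWfν : Integrable (fun z => W z * f z (v z)) ν := by
    refine (integrable_map_measure ?_ hZ.aemeasurable).mpr hWfint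
    exact (hW.mul (hfmeas.comp (measurable_id.prodMk hv))).aestronglyMeasurable
  -- the product set
  set t : Set (EuclideanSpace ℝ (Fin k) × ℝ) := {p | |p.2 - v p.1| < c} with htdef
  have ht : MeasurableSet t :=
    measurableSet_lt ((measurable_snd.sub (hv.comp measurable_fst)).abs) measurable_const
  have hpre : ∀ z : EuclideanSpace ℝ (Fin k), (Prod.mk z ⁻¹' t) = Metric.ball (v z) c := by
    intro z; ext x
    simp [htdef, Metric.mem_ball, Real.dist_eq]
  have hκmeas : Measurable fun z => κ z (Metric.ball (v z) c) := by
    have := Kernel.measurable_kernel_prodMk_left (κ := κ) ht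
    simpa [hpre] using this
  -- the integrand on the product space
  set g : EuclideanSpace ℝ (Fin k) × ℝ → ℝ := fun p => W p.1 * (2 * c)⁻¹ * (if |p.2 - v p.1| < c then (1:ℝ) else 0)
     with hgdef
  have hgmeas : Measurable g := by
    apply ((hW.comp measurable_fst).mul measurable_const).mul
    exact Measurable.ite ht measurable_const measurable_const
  -- integrability of g over ν ⊗ₘ κ
  have hbound_int : Integrable (fun p : EuclideanSpace ℝ (Fin k) × ℝ => |W p.1| * (2 * c)⁻¹) (ν.compProd κ) := by
    refine ⟨((hW.comp measurable_fst).abs.mul measurable_const).aestronglyMeasurable, ?_⟩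
    unfold HasFiniteIntegral
    have hmb : Measurable fun p : EuclideanSpace ℝ (Fin k) × ℝ =>
        ‖|W p.1| * (2 * c)⁻¹‖ₑ :=
      ((hW.comp measurable_fst).abs.mul measurable_const).enorm
    rw [Measure.lintegral_compProd hmb]
    have : ∀ z : EuclideanSpace ℝ (Fin k), ∫⁻ x, ‖|W z| * (2 * c)⁻¹‖ₑ ∂(κ z)
        = ‖|W z| * (2 * c)⁻¹‖ₑ := by
      intro z; rw [lintegral_const, measure_univ, mul_one]
    simp_rw [this]
    have h2 : Integrable (fun z => |W z| * (2 * c)⁻¹) ν := hWν.abs.mul_const _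
    exact h2.2
  have hgint : Integrable g (ν.compProd κ) := by
    refine Integrable.mono' hbound_int hgmeas.aestronglyMeasurable ?_
    refine Filter.Eventually.of_forall fun p => ?_
    rw [hgdef]
    simp only [Real.norm_eq_abs, abs_mul]
    have hind : |(if |p.2 - v p.1| < c then (1:ℝ) else 0)| ≤ 1 := by
      split <;> simp
    calc |W p.1| * |(2 * c)⁻¹| * |(if |p.2 - v p.1| < c then (1:ℝ) else 0)|
        ≤ |W p.1| * |(2 * c)⁻¹| * 1 := by gcongr
      _ = |W p.1| * (2 * c)⁻¹ := by
          rw [mul_one, abs_of_nonneg (by positivity : (0:ℝ) ≤ (2 * c)⁻¹)]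
  -- change of variables for the first integral
  have step1 : ∫ ω, W (Z ω) * (2 * c)⁻¹ * (if |X ω - v (Z ω)| < c then (1:ℝ) else 0) ∂μ
      = ∫ z, W z * ((2 * c)⁻¹ * (κ z (Metric.ball (v z) c)).toReal) ∂ν := by
    have hmapeq : ∫ ω, g (Z ω, X ω) ∂μ = ∫ p, g p ∂(ν.compProd κ) := by
      rw [hνdef, ← hjoint]
      exact (integral_map (hZ.prodMk hX).aemeasurable hgmeas.aestronglyMeasurable).symm
    have hinner : ∀ z : EuclideanSpace ℝ (Fin k), ∫ x, g (z, x) ∂(κ z)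
        = W z * ((2 * c)⁻¹ * (κ z (Metric.ball (v z) c)).toReal) := by
      intro z
      have : (fun x => g (z, x))
          = fun x => (W z * (2 * c)⁻¹) * (Metric.ball (v z) c).indicator (fun _ => (1:ℝ)) x := by
        funext x
        by_cases h : |x - v z| < c <;>
          simp [hgdef, Set.indicator_apply, Metric.mem_ball, Real.dist_eq, h]
      rw [this, integral_const_mul, integral_indicator_const _ measurableSet_ball]
      simp [mul_assoc, measureReal_def]
    calc ∫ ω, W (Z ω) * (2 * c)⁻¹ * (if |X ω - v (Z ω)| < c then (1:ℝ) else 0) ∂μ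
        = ∫ ω, g (Z ω, X ω) ∂μ := rfl
      _ = ∫ p, g p ∂(ν.compProd κ) := hmapeq
      _ = ∫ z, ∫ x, g (z, x) ∂(κ z) ∂ν := Measure.integral_compProd hgint
      _ = ∫ z, W z * ((2 * c)⁻¹ * (κ z (Metric.ball (v z) c)).toReal) ∂ν := by
          exact integral_congr_ae (Filter.Eventually.of_forall hinner)
  -- change of variables for the second and third integrals
  have step2 : ∫ ω, W (Z ω) * f (Z ω) (v (Z ω)) ∂μ = ∫ z, W z * f z (v z) ∂ν :=
    (integral_map hZ.aemeasurable
      (hW.mul (hfmeas.comp (measurable_id.prodMk hv))).aestronglyMeasurable).symm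
  have step3 : ∫ ω, |W (Z ω)| ∂μ = ∫ z, |W z| ∂ν :=
    (integral_map hZ.aemeasurable hW.abs.aestronglyMeasurable).symm
  -- integrability of the F term over ν
  set F : EuclideanSpace ℝ (Fin k) → ℝ := fun z => W z * ((2 * c)⁻¹ * (κ z (Metric.ball (v z) c)).toReal) with hFdef
  have hFmeas : Measurable F := hW.mul (measurable_const.mul hκmeas.ennreal_toReal)
  have hFint : Integrable F ν := by
    refine Integrable.mono' (hWν.abs.mul_const ((2 * c)⁻¹)) hFmeas.aestronglyMeasurable ?_
    refine Filter.Eventually.of_forall fun z => ?_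
    rw [hFdef]
    rw [Real.norm_eq_abs, abs_mul]
    have h1 : (κ z (Metric.ball (v z) c)).toReal ≤ 1 := by
      have := prob_le_one (μ := κ z) (s := Metric.ball (v z) c)
      exact ENNReal.toReal_le_of_le_ofReal one_pos.le (by simpa using this)
    have h2 : |(2 * c)⁻¹ * (κ z (Metric.ball (v z) c)).toReal| ≤ (2 * c)⁻¹ := by
      rw [abs_of_nonneg (by positivity)]
      exact mul_le_of_le_one_right (by positivity) h1
    exact mul_le_mul_of_nonneg_left h2 (abs_nonneg _)
  -- a.e. pointwise bound
  have hae : ∀ᵐ z ∂ν, |F z - W z * f z (v z)| ≤ |W z| * (K * c) := by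
    filter_upwards [hdens] with z hz
    have hkey := kernel_bias_pointwise K c (v z) hc (f z)
      (hfmeas.comp (measurable_prodMk_left)) (hfnn z) hz.2 (κ z) hz.1
      (measure_ne_top _ _)
    have : F z - W z * f z (v z)
        = W z * ((2 * c)⁻¹ * (κ z (Metric.ball (v z) c)).toReal - f z (v z)) := by
      rw [hFdef]; ring
    rw [this, abs_mul]
    exact mul_le_mul_of_nonneg_left hkey (abs_nonneg _)
  -- combine
  rw [step1, step2, step3]
  have hsub : ∫ z, F z ∂ν - ∫ z, W z * f z (v z) ∂ν
      = ∫ z, (F z - W z * f z (v z)) ∂ν := (integral_sub hFint hWfν).symm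
  rw [hsub]
  calc |∫ z, (F z - W z * f z (v z)) ∂ν|
      ≤ ∫ z, |F z - W z * f z (v z)| ∂ν := by
        simpa [Real.norm_eq_abs] using
          norm_integral_le_integral_norm (fun z => F z - W z * f z (v z))
    _ ≤ ∫ z, |W z| * (K * c) ∂ν := by
        refine integral_mono_ae (hFint.sub hWfν).abs (hWν.abs.mul_const _) hae
    _ = K * c * ∫ z, |W z| ∂ν := by
        rw [integral_mul_const]; ring
end

section
/- Let (Ω, 𝓐, μ) be a probability space with Z : Ω → ℝᵏ and X, Y : Ω → ℝ measurable, and suppose X has a conditional density bounded by K given Z. Let Θᵐ ⊆ ℝ^q be compact and let m : ℝᵏ × ℝ^q → ℝ be measurable with θᵐ ↦ m(z,θᵐ) continuous and sup_{θᵐ∈Θᵐ} |m(z,θᵐ)| ≤ M(z). Let θ₀ᵛ ∈ ℝᵖ and δ₀ > 0, and let v : ℝᵏ × ℝᵖ → ℝ be measurable with θᵛ ↦ v(z,θᵛ) continuously differentiable on the closed ball of radius δ₀ around θ₀ᵛ, with ‖∇v(z,θᵛ)‖ ≤ V₁(z) there. Assume E[M(Z)⁴] ≤ K, E[V₁(Z)²]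 ≤ K, E[V₁(Z)] ≤ K, and E[|Y|^{2q}] ≤ K for some q > 1. Then there exists a constant C > 0 such that for every δ ∈ (0, δ₀] there is a measurable function g : Ω → [0,∞) with: for μ-almost every ω, |S^MES((v(Z(ω),θᵛ), m(Z(ω),θᵐ)), (X(ω),Y(ω))) − S^MES((v(Z(ω),θ₀ᵛ), m(Z(ω),θᵐ)), (X(ω),Y(ω)))| ≤ g(ω) for all θᵐ ∈ Θᵐ and all θᵛ with ‖θᵛ − θ₀ᵛ‖ ≤ δ, and E[g] ≤ C·(δ + δ^{(q−1)/q}). -/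
open MeasureTheory ProbabilityTheory

/-- The MES loss `S^MES((v,m),(x,y)) = (1/2)·1{x > v}·(y − m)²`. -/
noncomputable def SMES (v m x y : ℝ) : ℝ :=
  (1 / 2) * (if v < x then (1 : ℝ) else 0) * (y - m) ^ 2

set_option maxHeartbeats 1000000 in
/-- Uniform L¹-continuity of the MES criterion in the VaR parameter (the bound on the
term B₁ₙ in the proof of Proposition 1): under a conditional density of `X` given `Z`
bounded by `K`, envelope bounds `M` on the MES model over the compact `Θᵐ` and `V₁` on
the gradient of the VaR model on the closed `δ₀`-ball around `θ₀ᵛ`, and the stated moment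
bounds, there is `C > 0` such that for every `δ ∈ (0, δ₀]` the oscillation of the MES
loss over `‖θᵛ − θ₀ᵛ‖ ≤ δ`, uniformly in `θᵐ ∈ Θᵐ`, is dominated by an integrable `g`
with `E[g] ≤ C·(δ + δ^{(q−1)/q})`. -/
theorem mes_criterion_L1_continuity
    {Ω : Type*} [MeasurableSpace Ω] (μ : Measure Ω) [IsProbabilityMeasure μ]
    {k p d : ℕ}
    (Z : Ω → EuclideanSpace ℝ (Fin k)) (hZ : Measurable Z)
    (X Y : Ω → ℝ) (hX : Measurable X) (hY : Measurable Y)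
    (K : ℝ)
    (κ : Kernel (EuclideanSpace ℝ (Fin k)) ℝ) [IsMarkovKernel κ]
    (f : EuclideanSpace ℝ (Fin k) → ℝ → ℝ)
    (hfmeas : Measurable fun zx : EuclideanSpace ℝ (Fin k) × ℝ => f zx.1 zx.2)
    (hfnn : ∀ z x, 0 ≤ f z x)
    (hjoint : Measure.map (fun ω => (Z ω, X ω)) μ = (Measure.map Z μ).compProd κ)
    (hdens : ∀ᵐ z ∂(Measure.map Z μ),
      κ z = (volume : Measure ℝ).withDensity (fun x => ENNReal.ofReal (f z x))
        ∧ ∀ x, f z x ≤ K)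
    (Θm : Set (EuclideanSpace ℝ (Fin d))) (hΘm : IsCompact Θm)
    (m : EuclideanSpace ℝ (Fin k) → EuclideanSpace ℝ (Fin d) → ℝ)
    (hmmeas : Measurable
      (fun zθ : EuclideanSpace ℝ (Fin k) × EuclideanSpace ℝ (Fin d) => m zθ.1 zθ.2))
    (hmcont : ∀ z, Continuous (m z))
    (M : EuclideanSpace ℝ (Fin k) → ℝ) (hMmeas : Measurable M)
    (hMbd : ∀ z, ∀ θm1 ∈ Θm, |m z θm1| ≤ M z)
    (θ₀v : EuclideanSpace ℝ (Fin p)) (δ₀ : ℝ) (hδ₀ : 0 < δ₀)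
    (v : EuclideanSpace ℝ (Fin k) → EuclideanSpace ℝ (Fin p) → ℝ)
    (hvmeas : Measurable
      (fun zθ : EuclideanSpace ℝ (Fin k) × EuclideanSpace ℝ (Fin p) => v zθ.1 zθ.2))
    (hvC1 : ∀ z, ContDiffOn ℝ 1 (v z) (Metric.closedBall θ₀v δ₀))
    (V₁ : EuclideanSpace ℝ (Fin k) → ℝ) (hV₁meas : Measurable V₁)
    (hV₁bd : ∀ z, ∀ θv1 ∈ Metric.closedBall θ₀v δ₀,
      ‖fderivWithin ℝ (v z) (Metric.closedBall θ₀v δ₀) θv1‖ ≤ V₁ z)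
    (q : ℝ) (hq : 1 < q)
    (hM4int : Integrable (fun ω => M (Z ω) ^ 4) μ) (hM4K : ∫ ω, M (Z ω) ^ 4 ∂μ ≤ K)
    (hV₁sqint : Integrable (fun ω => V₁ (Z ω) ^ 2) μ) (hV₁sqK : ∫ ω, V₁ (Z ω) ^ 2 ∂μ ≤ K)
    (hV₁int : Integrable (fun ω => V₁ (Z ω)) μ) (hV₁K : ∫ ω, V₁ (Z ω) ∂μ ≤ K)
    (hYint : Integrable (fun ω => |Y ω| ^ (2 * q)) μ) (hYK : ∫ ω, |Y ω| ^ (2 * q) ∂μ ≤ K) :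
    ∃ C > (0 : ℝ), ∀ δ ∈ Set.Ioc (0 : ℝ) δ₀,
      ∃ g : Ω → ℝ, Measurable g ∧ (∀ ω, 0 ≤ g ω) ∧
        (∀ᵐ ω ∂μ, ∀ θm1 ∈ Θm, ∀ θv1 : EuclideanSpace ℝ (Fin p), ‖θv1 - θ₀v‖ ≤ δ →
          |SMES (v (Z ω) θv1) (m (Z ω) θm1) (X ω) (Y ω)
            - SMES (v (Z ω) θ₀v) (m (Z ω) θm1) (X ω) (Y ω)| ≤ g ω) ∧
        Integrable g μ ∧
        ∫ ω, g ω ∂μ ≤ C * (δ + δ ^ ((q - 1) / q)) := by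
  classical
  -- basic positivity facts
  have hV₁nn : ∀ z, 0 ≤ V₁ z := fun z =>
    le_trans (norm_nonneg _) (hV₁bd z θ₀v (Metric.mem_closedBall_self hδ₀.le))
  have hKnn : 0 ≤ K :=
    le_trans (integral_nonneg fun ω => hV₁nn (Z ω)) hV₁K
  set ν := Measure.map Z μ with hν
  haveI : IsProbabilityMeasure ν := Measure.isProbabilityMeasure_map hZ.aemeasurable
  have hvθ₀ : Measurable fun z => v z θ₀v :=
    hvmeas.comp (measurable_id.prodMk measurable_const)
  -- the constant
  refine ⟨2 * K ^ 2 + K + 1, by positivity, ?_⟩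
  intro δ hδ
  obtain ⟨hδ0, hδδ₀⟩ := hδ
  -- the indicator of the "crossing band"
  set ind : Ω → ℝ :=
    fun ω => if dist (X ω) (v (Z ω) θ₀v) ≤ V₁ (Z ω) * δ then (1 : ℝ) else 0 with hind_def
  have hAmeas : MeasurableSet {ω | dist (X ω) (v (Z ω) θ₀v) ≤ V₁ (Z ω) * δ} :=
    measurableSet_le (hX.dist (hvθ₀.comp hZ)) ((hV₁meas.comp hZ).mul_const δ)
  have hind_meas : Measurable ind := Measurable.ite hAmeas measurable_const measurable_const
  have hind_nonneg : ∀ ω, 0 ≤ ind ω := by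
    intro ω; simp only [hind_def]; split <;> norm_num
  have hind_le_one : ∀ ω, ind ω ≤ 1 := by
    intro ω; simp only [hind_def]; split <;> norm_num
  -- the dominating function
  set g : Ω → ℝ := fun ω => (Y ω ^ 2 + M (Z ω) ^ 2) * ind ω with hg_def
  have hg_meas : Measurable g :=
    ((hY.pow_const 2).add ((hMmeas.comp hZ).pow_const 2)).mul hind_meas
  have hg_nonneg : ∀ ω, 0 ≤ g ω := fun ω =>
    mul_nonneg (by positivity) (hind_nonneg ω)
  -- pointwise domination
  have hdom : ∀ ω, ∀ θm1 ∈ Θm, ∀ θv1 : EuclideanSpace ℝ (Fin p), ‖θv1 - θ₀v‖ ≤ δ →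
      |SMES (v (Z ω) θv1) (m (Z ω) θm1) (X ω) (Y ω)
        - SMES (v (Z ω) θ₀v) (m (Z ω) θm1) (X ω) (Y ω)| ≤ g ω := by
    intro ω θm1 hθm1 θv1 hθv1
    set z := Z ω
    have hθv1mem : θv1 ∈ Metric.closedBall θ₀v δ₀ := by
      rw [Metric.mem_closedBall, dist_eq_norm]
      exact hθv1.trans hδδ₀
    have hmv : |v z θv1 - v z θ₀v| ≤ V₁ z * δ := by
      have h := (convex_closedBall θ₀v δ₀).norm_image_sub_le_of_norm_fderivWithin_le
        ((hvC1 z).differentiableOn one_ne_zero) (hV₁bd z)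
        (Metric.mem_closedBall_self hδ₀.le) hθv1mem
      calc |v z θv1 - v z θ₀v| ≤ V₁ z * ‖θv1 - θ₀v‖ := h
        _ ≤ V₁ z * δ := mul_le_mul_of_nonneg_left hθv1 (hV₁nn z)
    by_cases hab : (v z θv1 < X ω) ↔ (v z θ₀v < X ω)
    · have : SMES (v z θv1) (m z θm1) (X ω) (Y ω) = SMES (v z θ₀v) (m z θm1) (X ω) (Y ω) := by
        unfold SMES
        by_cases h : v z θ₀v < X ω
        · rw [if_pos h, if_pos (hab.mpr h)]
        · rw [if_neg h, if_neg (fun hh => h (hab.mp hh))]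
      rw [this, sub_self, abs_zero]
      exact hg_nonneg ω
    · -- the indicators differ, so X is in the band
      have hband : dist (X ω) (v z θ₀v) ≤ V₁ z * δ := by
        rw [Real.dist_eq]
        have ha := abs_le.mp hmv
        rcases lt_or_ge (v z θv1) (X ω) with h1 | h1 <;>
          rcases lt_or_ge (v z θ₀v) (X ω) with h2 | h2
        · exact absurd (iff_of_true h1 h2) hab
        · rw [abs_of_nonpos (by linarith)]; linarith
        · rw [abs_of_nonneg (by linarith)]; linarith
        · exact absurd (iff_of_false (not_lt.mpr h1) (not_lt.mpr h2)) hab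
      have hindone : ind ω = 1 := if_pos hband
      have habs : |m z θm1| ≤ M z := hMbd z θm1 hθm1
      have hsq : (1 / 2 : ℝ) * (Y ω - m z θm1) ^ 2 ≤ Y ω ^ 2 + M z ^ 2 := by
        have h1 : |Y ω - m z θm1| ≤ |Y ω| + M z :=
          (abs_sub _ _).trans (by linarith)
        nlinarith [sq_abs (Y ω - m z θm1), sq_abs (Y ω), abs_nonneg (Y ω - m z θm1),
          abs_nonneg (Y ω), sq_nonneg (|Y ω| - M z), sq_nonneg (|Y ω| + M z)]
      have hdiff : |SMES (v z θv1) (m z θm1) (X ω) (Y ω)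
          - SMES (v z θ₀v) (m z θm1) (X ω) (Y ω)|
          ≤ (1 / 2) * (Y ω - m z θm1) ^ 2 := by
        unfold SMES
        rcases Classical.em (v z θv1 < X ω) with h1 | h1 <;>
          rcases Classical.em (v z θ₀v < X ω) with h2 | h2 <;>
          simp [h1, h2, abs_of_nonneg, sq_nonneg] <;> positivity
      calc |SMES (v z θv1) (m z θm1) (X ω) (Y ω)
          - SMES (v z θ₀v) (m z θm1) (X ω) (Y ω)|
          ≤ (1 / 2) * (Y ω - m z θm1) ^ 2 := hdiff
        _ ≤ Y ω ^ 2 + M z ^ 2 := hsq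
        _ = (Y ω ^ 2 + M z ^ 2) * ind ω := by rw [hindone, mul_one]
  -- key lemma: weighted band probability bound
  have key : ∀ w : EuclideanSpace ℝ (Fin k) → ℝ, Measurable w → (∀ z, 0 ≤ w z) →
      Integrable (fun ω => w (Z ω) * V₁ (Z ω)) μ →
      Integrable (fun ω => w (Z ω) * ind ω) μ →
      ∫ ω, w (Z ω) * ind ω ∂μ ≤ 2 * K * δ * ∫ ω, w (Z ω) * V₁ (Z ω) ∂μ := by
    intro w hw hwnn hintV hintI
    set F : EuclideanSpace ℝ (Fin k) × ℝ → ENNReal := fun pr =>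
      ENNReal.ofReal (w pr.1) *
        (if dist pr.2 (v pr.1 θ₀v) ≤ V₁ pr.1 * δ then 1 else 0) with hF_def
    have hSmeas : MeasurableSet {pr : EuclideanSpace ℝ (Fin k) × ℝ |
        dist pr.2 (v pr.1 θ₀v) ≤ V₁ pr.1 * δ} :=
      measurableSet_le (measurable_snd.dist (hvθ₀.comp measurable_fst))
        ((hV₁meas.comp measurable_fst).mul_const δ)
    have hFmeas : Measurable F :=
      (ENNReal.measurable_ofReal.comp (hw.comp measurable_fst)).mul
        (Measurable.ite hSmeas measurable_const measurable_const)
    have hRHSnn : 0 ≤ 2 * K * δ * ∫ ω, w (Z ω) * V₁ (Z ω) ∂μ := by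
      apply mul_nonneg (by positivity)
      exact integral_nonneg fun ω => mul_nonneg (hwnn _) (hV₁nn _)
    rw [integral_eq_lintegral_of_nonneg_ae
      (Filter.Eventually.of_forall fun ω => mul_nonneg (hwnn _) (hind_nonneg ω))
      ((hw.comp hZ).mul hind_meas).aestronglyMeasurable]
    refine ENNReal.toReal_le_of_le_ofReal hRHSnn ?_
    calc ∫⁻ ω, ENNReal.ofReal (w (Z ω) * ind ω) ∂μ
        = ∫⁻ ω, F (Z ω, X ω) ∂μ := by
          refine lintegral_congr fun ω => ?_
          by_cases h : dist (X ω) (v (Z ω) θ₀v) ≤ V₁ (Z ω) * δ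
          · simp [hF_def, hind_def, h, ENNReal.ofReal_mul (hwnn (Z ω))]
          · simp [hF_def, hind_def, h]
      _ = ∫⁻ pr, F pr ∂(Measure.map (fun ω => (Z ω, X ω)) μ) :=
          (lintegral_map hFmeas (hZ.prodMk hX)).symm
      _ = ∫⁻ z, ∫⁻ x, F (z, x) ∂(κ z) ∂ν := by
          rw [hjoint]; exact Measure.lintegral_compProd hFmeas
      _ ≤ ∫⁻ z, ENNReal.ofReal (2 * K * δ * (w z * V₁ z)) ∂ν := by
          refine lintegral_mono_ae ?_
          filter_upwards [hdens] with z hz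
          obtain ⟨hκz, hfK⟩ := hz
          have hinner : ∫⁻ x, F (z, x) ∂(κ z)
              = ENNReal.ofReal (w z) * κ z (Metric.closedBall (v z θ₀v) (V₁ z * δ)) := by
            simp only [hF_def]
            rw [lintegral_const_mul' _ _ ENNReal.ofReal_ne_top]
            congr 1
            rw [← lintegral_indicator_one measurableSet_closedBall]
            refine lintegral_congr fun x => ?_
            by_cases h : dist x (v z θ₀v) ≤ V₁ z * δ
            · simp [h, Set.indicator_apply, Metric.mem_closedBall, Metric.closedBall]
            · simp [h, Set.indicator_apply, Metric.mem_closedBall, Metric.closedBall]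
          have hball : κ z (Metric.closedBall (v z θ₀v) (V₁ z * δ))
              ≤ ENNReal.ofReal K * ENNReal.ofReal (2 * (V₁ z * δ)) := by
            rw [hκz, withDensity_apply _ measurableSet_closedBall]
            calc ∫⁻ x in Metric.closedBall (v z θ₀v) (V₁ z * δ),
                  ENNReal.ofReal (f z x) ∂volume
                ≤ ∫⁻ _ in Metric.closedBall (v z θ₀v) (V₁ z * δ),
                  ENNReal.ofReal K ∂volume :=
                  setLIntegral_mono measurable_const
                    (fun x _ => ENNReal.ofReal_le_ofReal (hfK x))
              _ = ENNReal.ofReal K * volume (Metric.closedBall (v z θ₀v) (V₁ z * δ)) :=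
                  setLIntegral_const _ _
              _ = ENNReal.ofReal K * ENNReal.ofReal (2 * (V₁ z * δ)) := by
                  rw [Real.volume_closedBall]
          rw [hinner]
          calc ENNReal.ofReal (w z) * κ z (Metric.closedBall (v z θ₀v) (V₁ z * δ))
              ≤ ENNReal.ofReal (w z) *
                (ENNReal.ofReal K * ENNReal.ofReal (2 * (V₁ z * δ))) :=
                mul_le_mul_right hball _
            _ = ENNReal.ofReal (2 * K * δ * (w z * V₁ z)) := by
                rw [← ENNReal.ofReal_mul hKnn,
                  ← ENNReal.ofReal_mul (hwnn z)]
                congr 1; ring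
      _ = ∫⁻ ω, ENNReal.ofReal (2 * K * δ * (w (Z ω) * V₁ (Z ω))) ∂μ :=
          lintegral_map (ENNReal.measurable_ofReal.comp ((hw.mul hV₁meas).const_mul _)) hZ
      _ = ENNReal.ofReal (∫ ω, 2 * K * δ * (w (Z ω) * V₁ (Z ω)) ∂μ) :=
          (ofReal_integral_eq_lintegral_ofReal (hintV.const_mul _)
            (Filter.Eventually.of_forall fun ω =>
              mul_nonneg (by positivity) (mul_nonneg (hwnn _) (hV₁nn _)))).symm
      _ = ENNReal.ofReal (2 * K * δ * ∫ ω, w (Z ω) * V₁ (Z ω) ∂μ) := by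
          rw [integral_const_mul]
  -- integrability facts
  have hYsq_int : Integrable (fun ω => Y ω ^ 2) μ := by
    refine Integrable.mono' (hYint.add (integrable_const 1))
      (hY.pow_const 2).aestronglyMeasurable (Filter.Eventually.of_forall fun ω => ?_)
    rw [Real.norm_eq_abs, abs_of_nonneg (sq_nonneg _)]
    rcases le_or_gt (|Y ω|) 1 with h | h
    · have h1 : Y ω ^ 2 ≤ 1 := by rw [← sq_abs]; exact pow_le_one₀ (abs_nonneg _) h
      have h2 : (0:ℝ) ≤ |Y ω| ^ (2*q) := Real.rpow_nonneg (abs_nonneg _) _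
      simp only [Pi.add_apply]
      linarith
    · have h1 : Y ω ^ 2 = |Y ω| ^ ((2:ℕ):ℝ) := by
        rw [Real.rpow_natCast, sq_abs]
      have h2 : |Y ω| ^ ((2:ℕ):ℝ) ≤ |Y ω| ^ (2*q) :=
        Real.rpow_le_rpow_of_exponent_le h.le (by push_cast; nlinarith)
      simp only [Pi.add_apply]
      linarith [h1, h2]
  have hM2_int : Integrable (fun ω => M (Z ω) ^ 2) μ := by
    refine Integrable.mono' (hM4int.add (integrable_const 1))
      ((hMmeas.comp hZ).pow_const 2).aestronglyMeasurable
      (Filter.Eventually.of_forall fun ω => ?_)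
    rw [Real.norm_eq_abs, abs_of_nonneg (sq_nonneg _)]
    simp only [Pi.add_apply]
    nlinarith [sq_nonneg (M (Z ω) ^ 2 - 1)]
  have hM2V₁_int : Integrable (fun ω => M (Z ω) ^ 2 * V₁ (Z ω)) μ := by
    refine Integrable.mono' (hM4int.add hV₁sqint)
      (((hMmeas.comp hZ).pow_const 2).mul (hV₁meas.comp hZ)).aestronglyMeasurable
      (Filter.Eventually.of_forall fun ω => ?_)
    rw [Real.norm_eq_abs, abs_of_nonneg (mul_nonneg (sq_nonneg _) (hV₁nn _))]
    simp only [Pi.add_apply]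
    nlinarith [sq_nonneg (M (Z ω) ^ 2 - V₁ (Z ω)), sq_nonneg (M (Z ω) ^ 2), sq_nonneg (V₁ (Z ω))]
  have hM2V₁_K : ∫ ω, M (Z ω) ^ 2 * V₁ (Z ω) ∂μ ≤ K := by
    have h1 : ∫ ω, M (Z ω) ^ 2 * V₁ (Z ω) ∂μ
        ≤ ∫ ω, (M (Z ω) ^ 4 + V₁ (Z ω) ^ 2) / 2 ∂μ := by
      refine integral_mono hM2V₁_int ((hM4int.add hV₁sqint).div_const 2) fun ω => ?_
      nlinarith [sq_nonneg (M (Z ω) ^ 2 - V₁ (Z ω))]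
    rw [integral_div, integral_add hM4int hV₁sqint] at h1
    linarith
  have hind_int : Integrable ind μ := by
    refine Integrable.mono' (integrable_const 1) hind_meas.aestronglyMeasurable
      (Filter.Eventually.of_forall fun ω => ?_)
    rw [Real.norm_eq_abs, abs_of_nonneg (hind_nonneg ω)]; exact hind_le_one ω
  have hYind_int : Integrable (fun ω => Y ω ^ 2 * ind ω) μ :=
    Integrable.mono' hYsq_int ((hY.pow_const 2).mul hind_meas).aestronglyMeasurable
      (Filter.Eventually.of_forall fun ω => by
        rw [Real.norm_eq_abs, abs_of_nonneg (mul_nonneg (sq_nonneg _) (hind_nonneg ω))]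
        calc Y ω ^ 2 * ind ω ≤ Y ω ^ 2 * 1 :=
              mul_le_mul_of_nonneg_left (hind_le_one ω) (sq_nonneg _)
          _ = Y ω ^ 2 := mul_one _)
  have hMind_int : Integrable (fun ω => M (Z ω) ^ 2 * ind ω) μ :=
    Integrable.mono' hM2_int (((hMmeas.comp hZ).pow_const 2).mul hind_meas).aestronglyMeasurable
      (Filter.Eventually.of_forall fun ω => by
        rw [Real.norm_eq_abs, abs_of_nonneg (mul_nonneg (sq_nonneg _) (hind_nonneg ω))]
        calc M (Z ω) ^ 2 * ind ω ≤ M (Z ω) ^ 2 * 1 :=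
              mul_le_mul_of_nonneg_left (hind_le_one ω) (sq_nonneg _)
          _ = M (Z ω) ^ 2 := mul_one _)
  have hg_eq : g = fun ω => Y ω ^ 2 * ind ω + M (Z ω) ^ 2 * ind ω := by
    funext ω; simp only [hg_def]; ring
  have hg_int : Integrable g μ := by rw [hg_eq]; exact hYind_int.add hMind_int
  -- band probability bounds from the key lemma
  have hMind_bd : ∫ ω, M (Z ω) ^ 2 * ind ω ∂μ ≤ 2 * K * δ * ∫ ω, M (Z ω) ^ 2 * V₁ (Z ω) ∂μ :=
    key (fun z => M z ^ 2) (hMmeas.pow_const 2) (fun z => sq_nonneg _) hM2V₁_int hMind_int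
  have hind_bd : ∫ ω, ind ω ∂μ ≤ 2 * K * δ * ∫ ω, V₁ (Z ω) ∂μ := by
    have h := key (fun _ => 1) measurable_const (fun _ => zero_le_one)
      (by simpa using hV₁int) (by simpa using hind_int)
    simpa using h
  have hind_nn' : (0:ℝ) ≤ ∫ ω, ind ω ∂μ := integral_nonneg hind_nonneg
  -- truncation
  set T : ℝ := δ ^ (-(1/q)) with hT_def
  have hTpos : 0 < T := Real.rpow_pos_of_pos hδ0 _
  have he_nn : (0:ℝ) ≤ δ ^ ((q-1)/q) := Real.rpow_nonneg hδ0.le _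
  have hq0 : (0:ℝ) < q := by linarith
  have hTδ : T * δ = δ ^ ((q-1)/q) := by
    rw [hT_def]
    nth_rewrite 2 [show δ = δ ^ (1:ℝ) from (Real.rpow_one δ).symm]
    rw [← Real.rpow_add hδ0]
    congr 1; field_simp; ring
  have htrunc : ∀ ω, Y ω ^ 2 * ind ω ≤ T * ind ω + δ ^ ((q-1)/q) * |Y ω| ^ (2*q) := by
    intro ω
    have hrpnn : (0:ℝ) ≤ δ ^ ((q-1)/q) * |Y ω| ^ (2*q) :=
      mul_nonneg he_nn (Real.rpow_nonneg (abs_nonneg _) _)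
    rcases le_or_gt (Y ω ^ 2) T with h | h
    · have := mul_le_mul_of_nonneg_right h (hind_nonneg ω); linarith
    · have h2q : |Y ω| ^ (2*q) = (Y ω ^ 2) ^ q := by
        rw [← sq_abs, ← Real.rpow_natCast (|Y ω|) 2, ← Real.rpow_mul (abs_nonneg _)]
        norm_num
      have hstep : (Y ω ^ 2) * T ^ (q-1) ≤ (Y ω ^ 2) ^ q := by
        have hq' : (Y ω ^ 2 : ℝ) ^ q = (Y ω ^ 2) ^ ((1:ℝ) + (q-1)) := by norm_num
        rw [hq', Real.rpow_add (lt_trans hTpos h), Real.rpow_one]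
        exact mul_le_mul_of_nonneg_left
          (Real.rpow_le_rpow hTpos.le h.le (by linarith)) (sq_nonneg _)
      have hTq : T ^ (q-1) = δ ^ (-((q-1)/q)) := by
        rw [hT_def, ← Real.rpow_mul hδ0.le]
        congr 1
        field_simp
      have hmulone : T ^ (q-1) * δ ^ ((q-1)/q) = 1 := by
        rw [hTq, ← Real.rpow_add hδ0]
        simp
      have hY2 : Y ω ^ 2 ≤ δ ^ ((q-1)/q) * |Y ω| ^ (2*q) := by
        calc Y ω ^ 2 = (Y ω ^ 2 * T ^ (q-1)) * δ ^ ((q-1)/q) := by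
              rw [mul_assoc, hmulone, mul_one]
          _ ≤ (Y ω ^ 2) ^ q * δ ^ ((q-1)/q) :=
              mul_le_mul_of_nonneg_right hstep he_nn
          _ = δ ^ ((q-1)/q) * |Y ω| ^ (2*q) := by rw [h2q]; ring
      calc Y ω ^ 2 * ind ω ≤ Y ω ^ 2 * 1 :=
            mul_le_mul_of_nonneg_left (hind_le_one ω) (sq_nonneg _)
        _ = Y ω ^ 2 := mul_one _
        _ ≤ δ ^ ((q-1)/q) * |Y ω| ^ (2*q) := hY2
        _ ≤ T * ind ω + δ ^ ((q-1)/q) * |Y ω| ^ (2*q) :=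
            le_add_of_nonneg_left (mul_nonneg hTpos.le (hind_nonneg ω))
  have hYind_bd : ∫ ω, Y ω ^ 2 * ind ω ∂μ
      ≤ T * ∫ ω, ind ω ∂μ + δ ^ ((q-1)/q) * ∫ ω, |Y ω| ^ (2*q) ∂μ := by
    have hbint : Integrable
        (fun ω => T * ind ω + δ ^ ((q-1)/q) * |Y ω| ^ (2*q)) μ :=
      (hind_int.const_mul T).add (hYint.const_mul _)
    have h := integral_mono hYind_int hbint htrunc
    rwa [integral_add (hind_int.const_mul T) (hYint.const_mul _),
      integral_const_mul, integral_const_mul] at h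
  -- assemble
  refine ⟨g, hg_meas, hg_nonneg, Filter.Eventually.of_forall hdom, hg_int, ?_⟩
  have hV₁nn' : (0:ℝ) ≤ ∫ ω, V₁ (Z ω) ∂μ := integral_nonneg fun ω => hV₁nn _
  have hM2V₁nn : (0:ℝ) ≤ ∫ ω, M (Z ω) ^ 2 * V₁ (Z ω) ∂μ :=
    integral_nonneg fun ω => mul_nonneg (sq_nonneg _) (hV₁nn _)
  have e1 : ∫ ω, ind ω ∂μ ≤ 2 * K * δ * K := by
    calc ∫ ω, ind ω ∂μ ≤ 2 * K * δ * ∫ ω, V₁ (Z ω) ∂μ := hind_bd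
      _ ≤ 2 * K * δ * K := mul_le_mul_of_nonneg_left hV₁K (by positivity)
  have e2 : ∫ ω, M (Z ω) ^ 2 * ind ω ∂μ ≤ 2 * K * δ * K := by
    calc ∫ ω, M (Z ω) ^ 2 * ind ω ∂μ
        ≤ 2 * K * δ * ∫ ω, M (Z ω) ^ 2 * V₁ (Z ω) ∂μ := hMind_bd
      _ ≤ 2 * K * δ * K := mul_le_mul_of_nonneg_left hM2V₁_K (by positivity)
  have e3 : ∫ ω, Y ω ^ 2 * ind ω ∂μ
      ≤ 2 * K ^ 2 * δ ^ ((q-1)/q) + δ ^ ((q-1)/q) * K := by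
    have h1 : T * ∫ ω, ind ω ∂μ ≤ T * (2 * K * δ * K) :=
      mul_le_mul_of_nonneg_left e1 hTpos.le
    have h2 : T * (2 * K * δ * K) = 2 * K ^ 2 * δ ^ ((q-1)/q) := by
      rw [← hTδ]; ring
    have h3 : δ ^ ((q-1)/q) * ∫ ω, |Y ω| ^ (2*q) ∂μ ≤ δ ^ ((q-1)/q) * K :=
      mul_le_mul_of_nonneg_left hYK he_nn
    linarith [hYind_bd]
  have hg_int_eq : ∫ ω, g ω ∂μ
      = ∫ ω, Y ω ^ 2 * ind ω ∂μ + ∫ ω, M (Z ω) ^ 2 * ind ω ∂μ := by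
    rw [hg_eq]; exact integral_add hYind_int hMind_int
  rw [hg_int_eq]
  have hKδ : (0:ℝ) ≤ K * δ := mul_nonneg hKnn hδ0.le
  have hKe : (0:ℝ) ≤ K * δ ^ ((q-1)/q) := mul_nonneg hKnn he_nn
  have hexp : (2*K^2+K+1) * (δ + δ ^ ((q-1)/q))
      = 2*K^2*δ + K*δ + δ + 2*K^2*δ^((q-1)/q) + K*δ^((q-1)/q) + δ^((q-1)/q) := by
    ring
  rw [hexp]
  linarith [e2, e3, hδ0.le, he_nn, hKδ, hKe]
end
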